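/- arXiv:1607.08505 — 4 statements merged into one kernel-verified Lean document; each statement's English description precedes it below -/
import Mathlib

section
/- Let κ be an uncountable cardinal. Then (i) κ is Ulam measurable if and only if there is a singular countably additive pure state on l^∞(κ), and (ii) κ is measurable if and only if there is a singular <κ-additive pure state on l^∞(κ). -/
open scoped ComplexOrder

noncomputable section

/-- The C*-algebra `l^∞(X)` of bounded complex-valued functions on `X`. -/
abbrev Linf (X : Type) := lp (fun _ : X => ℂ) ⊤

/-- The indicator function `χ_S` as an element of `l^∞(X)`. -/
def chi {X : Type} (S : Set X) : Linf X :=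
  ⟨S.indicator 1, memℓp_infty ⟨1, by
    rintro r ⟨x, rfl⟩
    by_cases h : x ∈ S <;> simp [Set.indicator_apply, h]⟩⟩

/-- A state on `l^∞(X)`: a linear functional with `φ(1) = 1` which is nonnegative on
pointwise nonnegative functions. -/
def IsStateLinf {X : Type} (φ : Linf X →ₗ[ℂ] ℂ) : Prop :=
  φ 1 = 1 ∧ ∀ f : Linf X, (∀ x : X, 0 ≤ f x) → 0 ≤ φ f

/-- A singular state on `l^∞(X)`: it vanishes on all finitely supported functions. -/
def SingularLinf {X : Type} (φ : Linf X →ₗ[ℂ] ℂ) : Prop :=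
  ∀ f : Linf X, (Function.support fun x => f x).Finite → φ f = 0

/-- A countably additive state on `l^∞(X)`. -/
def CountablyAdditiveLinf {X : Type} (φ : Linf X →ₗ[ℂ] ℂ) : Prop :=
  ∀ S : ℕ → Set X, Pairwise (Function.onFun Disjoint S) →
    φ (chi (⋃ n, S n)) = ∑' n, φ (chi (S n))

/-- A `<κ`-additive state on `l^∞(X)`. -/
def KappaAdditiveLinf (κ : Cardinal.{0}) {X : Type} (φ : Linf X →ₗ[ℂ] ℂ) : Prop :=
  ∀ (ι : Type) (S : ι → Set X), Cardinal.mk ι < κ →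
    Pairwise (Function.onFun Disjoint S) →
    φ (chi (⋃ i, S i)) = ∑' i, φ (chi (S i))

/-- A pure state on `l^∞(X)`: an extreme point of the set of states. -/
def IsPureLinf {X : Type} (φ : Linf X →ₗ[ℂ] ℂ) : Prop :=
  φ ∈ Set.extremePoints ℝ {ψ : Linf X →ₗ[ℂ] ℂ | IsStateLinf ψ}

/-- A finitely additive probability measure defined on all subsets of `X`. -/
def IsFAProb {X : Type} (μ : Set X → ℝ) : Prop :=
  (∀ S : Set X, 0 ≤ μ S) ∧ μ Set.univ = 1 ∧
    ∀ S T : Set X, S ∩ T = ∅ → μ (S ∪ T) = μ S + μ T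

/-- The measure vanishes on singletons. -/
def VanishesOnSingletons {X : Type} (μ : Set X → ℝ) : Prop :=
  ∀ x : X, μ {x} = 0

/-- A countably additive measure. -/
def CountablyAdditiveMeas {X : Type} (μ : Set X → ℝ) : Prop :=
  ∀ S : ℕ → Set X, Pairwise (Function.onFun Disjoint S) →
    μ (⋃ n, S n) = ∑' n, μ (S n)

/-- A `<κ`-additive measure. -/
def KappaAdditiveMeas (κ : Cardinal.{0}) {X : Type} (μ : Set X → ℝ) : Prop :=
  ∀ (ι : Type) (S : ι → Set X), Cardinal.mk ι < κ →
    Pairwise (Function.onFun Disjoint S) →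
    μ (⋃ i, S i) = ∑' i, μ (S i)

/-- A `{0,1}`-valued measure. -/
def TwoValuedMeas {X : Type} (μ : Set X → ℝ) : Prop :=
  ∀ S : Set X, μ S = 0 ∨ μ S = 1

namespace QMC
open Filter Set Topology
variable {X : Type}
lemma chi_apply_mem {S : Set X} {x : X} (hx : x ∈ S) : chi S x = 1 := by
  show S.indicator 1 x = 1; simp [Set.indicator_of_mem hx]
lemma chi_apply_not_mem {S : Set X} {x : X} (hx : x ∉ S) : chi S x = 0 := by
  show S.indicator 1 x = 0; simp [Set.indicator_of_notMem hx]
lemma chi_nonneg (S : Set X) (x : X) : 0 ≤ chi S x := by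
  by_cases hx : x ∈ S
  · rw [chi_apply_mem hx]; exact zero_le_one
  · rw [chi_apply_not_mem hx]

lemma chi_univ : chi (Set.univ : Set X) = 1 := by
  apply Subtype.ext
  funext x
  show Set.indicator Set.univ 1 x = (1 : lp (fun _ : X => ℂ) ⊤) x
  rw [lp.infty_coeFn_one]
  simp

lemma chi_union {S T : Set X} (h : Disjoint S T) : chi (S ∪ T) = chi S + chi T := by
  apply Subtype.ext
  funext x
  show (S ∪ T).indicator 1 x = (chi S + chi T) x
  rw [lp.coeFn_add]
  show (S ∪ T).indicator (1 : X → ℂ) x = S.indicator (1 : X → ℂ) x + T.indicator (1 : X → ℂ) x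
  rw [Set.indicator_union_of_disjoint h]

lemma chi_mul_chi (S : Set X) : chi S * chi S = chi S := by
  apply Subtype.ext
  funext x
  rw [lp.infty_coeFn_mul]
  show chi S x * chi S x = chi S x
  by_cases hx : x ∈ S
  · rw [chi_apply_mem hx]; simp
  · rw [chi_apply_not_mem hx]; simp

def bd (g : X → ℂ) (C : ℝ) (h : ∀ x, ‖g x‖ ≤ C) : Linf X :=
  ⟨g, memℓp_infty ⟨C, by rintro r ⟨x, rfl⟩; exact h x⟩⟩
@[simp] lemma bd_apply (g : X → ℂ) (C : ℝ) (h : ∀ x, ‖g x‖ ≤ C) (x : X) :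
    (bd g C h) x = g x := rfl

-- SECTION 2: state boundedness
lemma norm_of_im_zero {z : ℂ} (h : z.im = 0) : ‖z‖ = |z.re| := by
  have hz : z = ((z.re : ℝ) : ℂ) := Complex.ext rfl (by simp [h])
  rw [hz, Complex.norm_real, Real.norm_eq_abs, Complex.ofReal_re]

variable {ψ : Linf X →ₗ[ℂ] ℂ}

lemma state_real_le (hψ : IsStateLinf ψ) {f : Linf X} {C : ℝ}
    (him : ∀ x, (f x).im = 0) (hre : ∀ x, |(f x).re| ≤ C) :
    (ψ f).im = 0 ∧ |(ψ f).re| ≤ C := by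
  have h1 : 0 ≤ ψ ((C : ℂ) • 1 - f) := by
    apply hψ.2
    intro x
    have : ((C : ℂ) • 1 - f) x = (C : ℂ) - f x := by
      rw [lp.coeFn_sub, Pi.sub_apply, lp.coeFn_smul, Pi.smul_apply, lp.infty_coeFn_one,
        Pi.one_apply, smul_eq_mul, mul_one]
    rw [this, Complex.nonneg_iff]
    constructor
    · simp only [Complex.sub_re, Complex.ofReal_re]
      have := abs_le.1 (hre x); linarith
    · simp [him x]
  have h2 : 0 ≤ ψ ((C : ℂ) • 1 + f) := by
    apply hψ.2
    intro x
    have : ((C : ℂ) • 1 + f) x = (C : ℂ) + f x := by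
      rw [lp.coeFn_add, Pi.add_apply, lp.coeFn_smul, Pi.smul_apply, lp.infty_coeFn_one,
        Pi.one_apply, smul_eq_mul, mul_one]
    rw [this, Complex.nonneg_iff]
    constructor
    · simp only [Complex.add_re, Complex.ofReal_re]
      have := abs_le.1 (hre x); linarith
    · simp [him x]
  rw [map_sub, map_smul, hψ.1, smul_eq_mul, mul_one, Complex.nonneg_iff] at h1
  rw [map_add, map_smul, hψ.1, smul_eq_mul, mul_one, Complex.nonneg_iff] at h2
  simp only [Complex.sub_re, Complex.sub_im, Complex.add_re, Complex.add_im,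
    Complex.ofReal_re, Complex.ofReal_im] at h1 h2
  constructor
  · linarith [h1.2, h2.2]
  · rw [abs_le]; constructor <;> linarith [h1.1, h2.1]

lemma state_norm_le (hψ : IsStateLinf ψ) (f : Linf X) : ‖ψ f‖ ≤ 2 * ‖f‖ := by
  have hb : ∀ x : X, ‖f x‖ ≤ ‖f‖ := fun x => lp.norm_apply_le_norm ENNReal.top_ne_zero f x
  set fre : Linf X := bd (fun x => ((f x).re : ℂ)) ‖f‖
    (fun x => by rw [Complex.norm_real]; exact (Complex.abs_re_le_norm _).trans (hb x)) with hfre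
  set fim : Linf X := bd (fun x => ((f x).im : ℂ)) ‖f‖
    (fun x => by rw [Complex.norm_real]; exact (Complex.abs_im_le_norm _).trans (hb x)) with hfim
  have hsplit : f = fre + Complex.I • fim := by
    apply Subtype.ext
    funext x
    rw [lp.coeFn_add, Pi.add_apply, lp.coeFn_smul, Pi.smul_apply]
    show f x = ((f x).re : ℂ) + Complex.I • ((f x).im : ℂ)
    rw [smul_eq_mul, mul_comm, Complex.re_add_im]
  have h1 := state_real_le hψ (f := fre) (C := ‖f‖)
    (fun x => Complex.ofReal_im _) (fun x => by
      show |(((f x).re : ℂ)).re| ≤ ‖f‖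
      rw [Complex.ofReal_re]
      exact (Complex.abs_re_le_norm _).trans (hb x))
  have h2 := state_real_le hψ (f := fim) (C := ‖f‖)
    (fun x => Complex.ofReal_im _) (fun x => by
      show |(((f x).im : ℂ)).re| ≤ ‖f‖
      rw [Complex.ofReal_re]
      exact (Complex.abs_im_le_norm _).trans (hb x))
  have hval : ψ f = ψ fre + Complex.I * ψ fim := by
    rw [hsplit, map_add, map_smul, smul_eq_mul]
  rw [hval]
  calc ‖ψ fre + Complex.I * ψ fim‖ ≤ ‖ψ fre‖ + ‖Complex.I * ψ fim‖ := norm_add_le _ _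
    _ = ‖ψ fre‖ + ‖ψ fim‖ := by rw [norm_mul, Complex.norm_I, one_mul]
    _ ≤ ‖f‖ + ‖f‖ := by
        gcongr
        · rw [norm_of_im_zero h1.1]; exact h1.2
        · rw [norm_of_im_zero h2.1]; exact h2.2
    _ = 2 * ‖f‖ := by ring

-- SECTION 3: support lemmas
lemma state_nonneg_supported_zero (hψ : IsStateLinf ψ) {T : Set X} (hT : ψ (chi T) = 0)
    {u : Linf X} (hu0 : ∀ x, 0 ≤ u x) (huT : ∀ x ∉ T, u x = 0)
    {C : ℝ} (huC : ∀ x, (u x).re ≤ C) : ψ u = 0 := by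
  have hv : 0 ≤ ψ ((C : ℂ) • chi T - u) := by
    apply hψ.2
    intro x
    have hcoe : ((C : ℂ) • chi T - u) x = (C : ℂ) * chi T x - u x := by
      rw [lp.coeFn_sub, Pi.sub_apply, lp.coeFn_smul, Pi.smul_apply, smul_eq_mul]
    rw [hcoe]
    by_cases hx : x ∈ T
    · rw [chi_apply_mem hx, mul_one, Complex.nonneg_iff]
      have him := (Complex.nonneg_iff.1 (hu0 x)).2
      constructor
      · simp only [Complex.sub_re, Complex.ofReal_re]; linarith [huC x]
      · simp [← him]
    · rw [chi_apply_not_mem hx, mul_zero, huT x hx, sub_zero]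
  rw [map_sub, map_smul, hT, smul_zero, zero_sub] at hv
  have h0 : 0 ≤ ψ u := hψ.2 u hu0
  have := neg_nonneg.1 hv
  exact le_antisymm this h0

lemma state_supported_zero (hψ : IsStateLinf ψ) {T : Set X} (hT : ψ (chi T) = 0)
    {f : Linf X} (h0 : ∀ x ∉ T, f x = 0) : ψ f = 0 := by
  have hb : ∀ x : X, ‖f x‖ ≤ ‖f‖ := fun x => lp.norm_apply_le_norm ENNReal.top_ne_zero f x
  have hmax : ∀ (x : X) (r : ℝ), r = (f x).re ∨ r = -(f x).re ∨ r = (f x).im ∨ r = -(f x).im →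
      max r 0 ≤ ‖f‖ := by
    intro x r hr
    rw [max_le_iff]
    refine ⟨?_, norm_nonneg f⟩
    rcases hr with h|h|h|h <;> subst h
    · exact (le_abs_self _).trans ((Complex.abs_re_le_norm _).trans (hb x))
    · exact (neg_le_abs _).trans ((Complex.abs_re_le_norm _).trans (hb x))
    · exact (le_abs_self _).trans ((Complex.abs_im_le_norm _).trans (hb x))
    · exact (neg_le_abs _).trans ((Complex.abs_im_le_norm _).trans (hb x))
  have hnorm : ∀ (x : X) (r : ℝ),
      r = (f x).re ∨ r = -(f x).re ∨ r = (f x).im ∨ r = -(f x).im →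
      ‖((max r 0 : ℝ) : ℂ)‖ ≤ ‖f‖ := fun x r hr => by
    rw [Complex.norm_real, Real.norm_eq_abs, abs_of_nonneg (le_max_right _ _)]
    exact hmax x r hr
  set u1 : Linf X := bd (fun x => ((max ((f x).re) 0 : ℝ) : ℂ)) ‖f‖
    (fun x => hnorm x _ (Or.inl rfl)) with hu1
  set u2 : Linf X := bd (fun x => ((max (-(f x).re) 0 : ℝ) : ℂ)) ‖f‖
    (fun x => hnorm x _ (Or.inr (Or.inl rfl))) with hu2
  set u3 : Linf X := bd (fun x => ((max ((f x).im) 0 : ℝ) : ℂ)) ‖f‖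
    (fun x => hnorm x _ (Or.inr (Or.inr (Or.inl rfl)))) with hu3
  set u4 : Linf X := bd (fun x => ((max (-(f x).im) 0 : ℝ) : ℂ)) ‖f‖
    (fun x => hnorm x _ (Or.inr (Or.inr (Or.inr rfl)))) with hu4
  have z1 : ψ u1 = 0 := by
    refine state_nonneg_supported_zero hψ hT (C := ‖f‖) ?_ ?_ ?_
    · intro x; exact Complex.zero_le_real.2 (le_max_right _ _)
    · intro x hx; show ((max ((f x).re) 0 : ℝ) : ℂ) = 0; rw [h0 x hx]; norm_num
    · intro x; show ((max ((f x).re) 0 : ℝ) : ℂ).re ≤ ‖f‖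
      rw [Complex.ofReal_re]; exact hmax x _ (Or.inl rfl)
  have z2 : ψ u2 = 0 := by
    refine state_nonneg_supported_zero hψ hT (C := ‖f‖) ?_ ?_ ?_
    · intro x; exact Complex.zero_le_real.2 (le_max_right _ _)
    · intro x hx; show ((max (-(f x).re) 0 : ℝ) : ℂ) = 0; rw [h0 x hx]; norm_num
    · intro x; show ((max (-(f x).re) 0 : ℝ) : ℂ).re ≤ ‖f‖
      rw [Complex.ofReal_re]; exact hmax x _ (Or.inr (Or.inl rfl))
  have z3 : ψ u3 = 0 := by
    refine state_nonneg_supported_zero hψ hT (C := ‖f‖) ?_ ?_ ?_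
    · intro x; exact Complex.zero_le_real.2 (le_max_right _ _)
    · intro x hx; show ((max ((f x).im) 0 : ℝ) : ℂ) = 0; rw [h0 x hx]; norm_num
    · intro x; show ((max ((f x).im) 0 : ℝ) : ℂ).re ≤ ‖f‖
      rw [Complex.ofReal_re]; exact hmax x _ (Or.inr (Or.inr (Or.inl rfl)))
  have z4 : ψ u4 = 0 := by
    refine state_nonneg_supported_zero hψ hT (C := ‖f‖) ?_ ?_ ?_
    · intro x; exact Complex.zero_le_real.2 (le_max_right _ _)
    · intro x hx; show ((max (-(f x).im) 0 : ℝ) : ℂ) = 0; rw [h0 x hx]; norm_num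
    · intro x; show ((max (-(f x).im) 0 : ℝ) : ℂ).re ≤ ‖f‖
      rw [Complex.ofReal_re]; exact hmax x _ (Or.inr (Or.inr (Or.inr rfl)))
  have hdec : f = u1 - u2 + Complex.I • u3 - Complex.I • u4 := by
    apply Subtype.ext
    funext x
    rw [lp.coeFn_sub, Pi.sub_apply, lp.coeFn_add, Pi.add_apply, lp.coeFn_sub, Pi.sub_apply,
      lp.coeFn_smul, Pi.smul_apply, lp.coeFn_smul, Pi.smul_apply]
    show f x = ((max ((f x).re) 0 : ℝ) : ℂ) - ((max (-(f x).re) 0 : ℝ) : ℂ)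
        + Complex.I • ((max ((f x).im) 0 : ℝ) : ℂ) - Complex.I • ((max (-(f x).im) 0 : ℝ) : ℂ)
    rw [smul_eq_mul, smul_eq_mul]
    have hre : (max ((f x).re) 0 : ℝ) - max (-(f x).re) 0 = (f x).re :=
      max_zero_sub_max_neg_zero_eq_self _
    have him : (max ((f x).im) 0 : ℝ) - max (-(f x).im) 0 = (f x).im :=
      max_zero_sub_max_neg_zero_eq_self _
    apply Complex.ext <;> simp [Complex.sub_re, Complex.add_re, Complex.sub_im, Complex.add_im] <;>
      linarith [hre, him]
  rw [hdec, map_sub, map_add, map_sub, map_smul, map_smul, z1, z2, z3, z4]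
  simp

-- SECTION 4: ultrafilter limits
def ulim (U : Ultrafilter X) (f : Linf X) : ℂ := limUnder (U : Filter X) ⇑f

lemma ulim_tendsto (U : Ultrafilter X) (f : Linf X) :
    Tendsto ⇑f (U : Filter X) (𝓝 (ulim U f)) := by
  have hmem : Metric.closedBall (0 : ℂ) ‖f‖ ∈ Ultrafilter.map (⇑f) U := by
    rw [Ultrafilter.mem_map]
    apply Filter.univ_mem'
    intro x
    simp only [Set.mem_preimage, Metric.mem_closedBall, dist_zero_right]
    exact lp.norm_apply_le_norm ENNReal.top_ne_zero f x
  obtain ⟨a, -, ha⟩ := (isCompact_closedBall (0 : ℂ) ‖f‖).ultrafilter_le_nhds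
    (Ultrafilter.map (⇑f) U) (le_principal_iff.2 hmem)
  have hTend : Tendsto ⇑f (U : Filter X) (𝓝 a) := by
    rwa [Tendsto, ← Ultrafilter.coe_map]
  rwa [ulim, hTend.limUnder_eq]

def ufState (U : Ultrafilter X) : Linf X →ₗ[ℂ] ℂ where
  toFun := ulim U
  map_add' f g := by
    have h : Tendsto ⇑(f + g) (U : Filter X) (𝓝 (ulim U f + ulim U g)) := by
      rw [lp.coeFn_add]
      exact (ulim_tendsto U f).add (ulim_tendsto U g)
    exact h.limUnder_eq
  map_smul' c f := by
    have h : Tendsto ⇑(c • f) (U : Filter X) (𝓝 (c * ulim U f)) := by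
      rw [lp.coeFn_smul]
      exact ((ulim_tendsto U f).const_mul c).congr (fun x => rfl)
    exact h.limUnder_eq

lemma ufState_apply (U : Ultrafilter X) (f : Linf X) : ufState U f = ulim U f := rfl

lemma ufState_eq_of_tendsto {U : Ultrafilter X} {f : Linf X} {a : ℂ}
    (h : Tendsto ⇑f (U : Filter X) (𝓝 a)) : ufState U f = a :=
  h.limUnder_eq

lemma ufState_chi_mem {U : Ultrafilter X} {S : Set X} (h : S ∈ U) :
    ufState U (chi S) = 1 := by
  apply ufState_eq_of_tendsto
  apply Tendsto.congr' (f₁ := fun _ => (1 : ℂ)) _ tendsto_const_nhds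
  filter_upwards [h] with x hx
  exact (chi_apply_mem hx).symm

lemma ufState_chi_not_mem {U : Ultrafilter X} {S : Set X} (h : S ∉ U) :
    ufState U (chi S) = 0 := by
  apply ufState_eq_of_tendsto
  apply Tendsto.congr' (f₁ := fun _ => (0 : ℂ)) _ tendsto_const_nhds
  filter_upwards [(Ultrafilter.compl_mem_iff_notMem).2 h] with x hx
  exact (chi_apply_not_mem hx).symm

lemma isClosed_nonneg : IsClosed {z : ℂ | 0 ≤ z} := by
  have : {z : ℂ | 0 ≤ z} = Complex.re ⁻¹' Set.Ici 0 ∩ Complex.im ⁻¹' {0} := by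
    ext z
    simp only [Set.mem_setOf_eq, Complex.nonneg_iff, Set.mem_inter_iff, Set.mem_preimage,
      Set.mem_Ici, Set.mem_singleton_iff]
    exact and_congr Iff.rfl eq_comm
  rw [this]
  exact (isClosed_Ici.preimage Complex.continuous_re).inter
    (isClosed_singleton.preimage Complex.continuous_im)

lemma ufState_isState (U : Ultrafilter X) : IsStateLinf (ufState U) := by
  constructor
  · apply ufState_eq_of_tendsto
    rw [lp.infty_coeFn_one]
    exact tendsto_const_nhds
  · intro f hf
    have := ulim_tendsto U f
    exact isClosed_nonneg.mem_of_tendsto this (Filter.Eventually.of_forall hf)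

-- SECTION 5: chi values of states, uniqueness, purity
lemma chi_add_compl (S : Set X) : chi S + chi Sᶜ = 1 := by
  rw [← chi_union disjoint_compl_right, Set.union_compl_self, chi_univ]

lemma state_chi_mem_unit (hψ : IsStateLinf ψ) (S : Set X) :
    (ψ (chi S)).im = 0 ∧ 0 ≤ (ψ (chi S)).re ∧ (ψ (chi S)).re ≤ 1 := by
  have h1 := hψ.2 (chi S) (chi_nonneg S)
  have h2 := hψ.2 (chi Sᶜ) (chi_nonneg Sᶜ)
  have hsum : ψ (chi S) + ψ (chi Sᶜ) = 1 := by
    rw [← map_add, chi_add_compl, hψ.1]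
  rw [Complex.nonneg_iff] at h1 h2
  refine ⟨h1.2.symm, h1.1, ?_⟩
  have := congrArg Complex.re hsum
  simp only [Complex.add_re, Complex.one_re] at this
  linarith [h2.1]

lemma state_chi_real (hψ : IsStateLinf ψ) (S : Set X) :
    ψ (chi S) = (((ψ (chi S)).re : ℝ) : ℂ) :=
  Complex.ext rfl (by rw [(state_chi_mem_unit hψ S).1, Complex.ofReal_im])

lemma state_chi_compl_zero (hψ : IsStateLinf ψ) {S : Set X} (h : ψ (chi S) = 1) :
    ψ (chi Sᶜ) = 0 := by
  have hsum : ψ (chi S) + ψ (chi Sᶜ) = 1 := by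
    rw [← map_add, chi_add_compl, hψ.1]
  rw [h] at hsum
  linear_combination hsum

lemma state_eq_ulim {U : Ultrafilter X} (hψ : IsStateLinf ψ)
    (h : ∀ S ∈ U, ψ (chi S) = 1) (f : Linf X) : ψ f = ulim U f := by
  set a := ulim U f with ha
  have : ∀ ε : ℝ, 0 < ε → ‖ψ f - a‖ ≤ 2 * ε := by
    intro ε hε
    set T : Set X := {x | f x ∈ Metric.closedBall a ε} with hTdef
    have hTU : T ∈ U := (ulim_tendsto U f) (Metric.closedBall_mem_nhds a hε)
    have hcompl : ψ (chi Tᶜ) = 0 := state_chi_compl_zero hψ (h T hTU)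
    set g : Linf X := f - a • 1 with hg
    have hgx : ∀ x, g x = f x - a := by
      intro x
      rw [hg, lp.coeFn_sub, Pi.sub_apply, lp.coeFn_smul, Pi.smul_apply, lp.infty_coeFn_one,
        Pi.one_apply, smul_eq_mul, mul_one]
    have hgb : ∀ x, ‖g x‖ ≤ ‖g‖ := fun x => lp.norm_apply_le_norm ENNReal.top_ne_zero g x
    set gT : Linf X := bd (fun x => T.indicator (⇑g) x) ε (fun x => by
      show ‖T.indicator (⇑g) x‖ ≤ ε
      by_cases hx : x ∈ T
      · rw [Set.indicator_of_mem hx, hgx x]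
        simpa [hTdef, dist_eq_norm] using hx
      · rw [Set.indicator_of_notMem hx]; simp [le_of_lt hε]) with hgT
    set gTc : Linf X := bd (fun x => Tᶜ.indicator (⇑g) x) ‖g‖ (fun x => by
      show ‖Tᶜ.indicator (⇑g) x‖ ≤ ‖g‖
      by_cases hx : x ∈ Tᶜ
      · rw [Set.indicator_of_mem hx]; exact hgb x
      · rw [Set.indicator_of_notMem hx, norm_zero]; exact norm_nonneg g) with hgTc
    have hsplit : g = gT + gTc := by
      apply Subtype.ext
      funext x
      rw [lp.coeFn_add, Pi.add_apply]
      show g x = T.indicator (⇑g) x + Tᶜ.indicator (⇑g) x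
      by_cases hx : x ∈ T
      · rw [Set.indicator_of_mem hx, Set.indicator_of_notMem (by simpa using hx)]
        simp
      · rw [Set.indicator_of_notMem hx, Set.indicator_of_mem (by simpa using hx)]
        simp
    have hzero : ψ gTc = 0 := by
      apply state_supported_zero hψ hcompl
      intro x hx
      show Tᶜ.indicator (⇑g) x = 0
      exact Set.indicator_of_notMem hx _
    have hgTnorm : ‖gT‖ ≤ ε := by
      apply lp.norm_le_of_forall_le (le_of_lt hε)
      intro x
      show ‖T.indicator (⇑g) x‖ ≤ ε
      by_cases hx : x ∈ T
      · rw [Set.indicator_of_mem hx, hgx x]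
        simpa [hTdef, dist_eq_norm] using hx
      · rw [Set.indicator_of_notMem hx]; simp [le_of_lt hε]
    have hval : ψ f - a = ψ gT := by
      have : ψ g = ψ f - a := by
        rw [hg, map_sub, map_smul, hψ.1, smul_eq_mul, mul_one]
      rw [← this, hsplit, map_add, hzero, add_zero]
    rw [hval]
    calc ‖ψ gT‖ ≤ 2 * ‖gT‖ := state_norm_le hψ gT
      _ ≤ 2 * ε := by linarith [hgTnorm]
  by_contra hne
  have hpos : 0 < ‖ψ f - a‖ := by
    rw [norm_pos_iff, sub_ne_zero]; exact hne
  have := this (‖ψ f - a‖ / 4) (by linarith)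
  linarith

-- SECTION 6: purity of ufState
set_option maxHeartbeats 1000000 in
lemma ufState_pure (U : Ultrafilter X) :
    (ufState U) ∈ Set.extremePoints ℝ {ψ : Linf X →ₗ[ℂ] ℂ | IsStateLinf ψ} := by
  refine ⟨ufState_isState U, ?_⟩
  intro ψ₁ h₁ ψ₂ h₂ hseg
  obtain ⟨a, b, ha, hb, hab, heq⟩ := hseg
  have hkey : ∀ ψ : Linf X →ₗ[ℂ] ℂ, IsStateLinf ψ →
      (∀ S ∈ U, ψ (chi S) = 1) → ψ = ufState U := by
    intro ψ hψ hchi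
    apply LinearMap.ext
    intro f
    rw [state_eq_ulim hψ hchi f, ufState_apply]
  have hval : ∀ S ∈ U, ψ₁ (chi S) = 1 ∧ ψ₂ (chi S) = 1 := by
    intro S hS
    have h0 : ufState U (chi S) = 1 := ufState_chi_mem hS
    have happ : a • ψ₁ (chi S) + b • ψ₂ (chi S) = 1 := by
      rw [← LinearMap.smul_apply, ← LinearMap.smul_apply, ← LinearMap.add_apply, heq, h0]
    have hre : a * (ψ₁ (chi S)).re + b * (ψ₂ (chi S)).re = 1 := by
      have := congrArg Complex.re happ
      simpa [Complex.add_re, Complex.smul_re] using this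
    have hm1 := state_chi_mem_unit h₁ S
    have hm2 := state_chi_mem_unit h₂ S
    have hr1 : (ψ₁ (chi S)).re = 1 := by nlinarith [hm1.2.2, hm2.2.2, hm1.2.1, hm2.2.1]
    have hr2 : (ψ₂ (chi S)).re = 1 := by nlinarith [hm1.2.2, hm2.2.2, hm1.2.1, hm2.2.1]
    constructor
    · rw [state_chi_real h₁ S, hr1]; norm_num
    · rw [state_chi_real h₂ S, hr2]; norm_num
  exact hkey ψ₁ h₁ (fun S hS => (hval S hS).1)

-- SECTION 7: measures and ultrafilters
section Measure
variable {μ : Set X → ℝ}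

lemma mu_empty (hμ : IsFAProb μ) : μ ∅ = 0 := by
  have := hμ.2.2 ∅ ∅ (by simp)
  simp only [Set.union_empty] at this
  linarith

lemma mu_compl (hμ : IsFAProb μ) (S : Set X) : μ Sᶜ = 1 - μ S := by
  have := hμ.2.2 S Sᶜ (Set.inter_compl_self S)
  rw [Set.union_compl_self, hμ.2.1] at this
  linarith

lemma mu_le_one (hμ : IsFAProb μ) (S : Set X) : μ S ≤ 1 := by
  have := mu_compl hμ S
  have := hμ.1 Sᶜ
  linarith

lemma mu_mono (hμ : IsFAProb μ) {S T : Set X} (h : S ⊆ T) : μ S ≤ μ T := by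
  have hd : S ∩ (T \ S) = ∅ := by ext x; simp
  have := hμ.2.2 S (T \ S) hd
  rw [Set.union_diff_cancel h] at this
  have := hμ.1 (T \ S)
  linarith

lemma mu_union_le (hμ : IsFAProb μ) (S T : Set X) : μ (S ∪ T) ≤ μ S + μ T := by
  have hd : S ∩ (T \ S) = ∅ := by ext x; simp
  have h1 := hμ.2.2 S (T \ S) hd
  rw [Set.union_diff_self] at h1
  have h2 := mu_mono hμ (Set.diff_subset (s := T) (t := S))
  linarith

def ufOf (hμ : IsFAProb μ) (h2 : ∀ S : Set X, μ S = 0 ∨ μ S = 1) : Ultrafilter X :=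
  Ultrafilter.ofComplNotMemIff
    { sets := {S | μ S = 1}
      univ_sets := hμ.2.1
      sets_of_superset := fun {S T} hS hsub =>
        le_antisymm (mu_le_one hμ T) (hS ▸ mu_mono hμ hsub)
      inter_sets := fun {S T} hS hT => by
        have hc : μ (S ∩ T)ᶜ ≤ 0 := by
          rw [Set.compl_inter]
          have h1 := mu_union_le hμ Sᶜ Tᶜ
          rw [mu_compl hμ S, mu_compl hμ T] at h1
          simp only [Set.mem_setOf_eq] at hS hT
          linarith
        have := mu_compl hμ (S ∩ T)
        have := hμ.1 (S ∩ T)ᶜ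
        show μ (S ∩ T) = 1
        linarith }
    (by
      intro S
      show ¬ (μ Sᶜ = 1) ↔ μ S = 1
      rw [mu_compl hμ S]
      rcases h2 S with h | h <;> rw [h] <;> norm_num)

lemma mem_ufOf (hμ : IsFAProb μ) (h2 : ∀ S : Set X, μ S = 0 ∨ μ S = 1) (S : Set X) :
    S ∈ ufOf hμ h2 ↔ μ S = 1 := Iff.rfl

lemma ufState_ufOf_chi (hμ : IsFAProb μ) (h2 : ∀ S : Set X, μ S = 0 ∨ μ S = 1) (S : Set X) :
    ufState (ufOf hμ h2) (chi S) = ((μ S : ℝ) : ℂ) := by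
  rcases h2 S with h | h
  · rw [h, ufState_chi_not_mem (by rw [mem_ufOf, h]; norm_num)]
    norm_num
  · rw [h, ufState_chi_mem (by rw [mem_ufOf, h])]
    norm_num

lemma mu_finite_zero (hμ : IsFAProb μ) (hvs : ∀ x : X, μ {x} = 0) :
    ∀ S : Set X, S.Finite → μ S = 0 := by
  intro S hS
  refine Set.Finite.induction_on S hS (mu_empty hμ) ?_
  intro a s ha hs ih
  have hd : ({a} : Set X) ∩ s = ∅ := by
    ext x; simp; rintro rfl; exact ha
  have := hμ.2.2 {a} s hd
  rw [Set.singleton_union] at this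
  rw [this, hvs a, ih, add_zero]

end Measure

-- SECTION 8: pure states are two-valued on projections
lemma chi_mul_apply (S : Set X) (f : Linf X) (x : X) : (chi S * f) x = chi S x * f x := by
  rw [lp.infty_coeFn_mul]; rfl

set_option maxHeartbeats 2000000 in
def mulState (φ : Linf X →ₗ[ℂ] ℂ) (S : Set X) (c : ℝ) : Linf X →ₗ[ℂ] ℂ where
  toFun f := (c : ℂ) * φ (chi S * f)
  map_add' f g := by
    show (c : ℂ) * φ (chi S * (f + g)) = (c : ℂ) * φ (chi S * f) + (c : ℂ) * φ (chi S * g)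
    rw [mul_add, map_add, mul_add]
  map_smul' c' f := by
    have h : chi S * (c' • f) = c' • (chi S * f) := by
      apply Subtype.ext
      funext x
      rw [lp.infty_coeFn_mul, lp.coeFn_smul]
      show chi S x * (c' • ⇑f) x = (c' • (⇑(chi S * f))) x
      rw [Pi.smul_apply, Pi.smul_apply, smul_eq_mul, smul_eq_mul, chi_mul_apply]
      ring
    show (c : ℂ) * φ (chi S * (c' • f)) = (RingHom.id ℂ) c' • ((c : ℂ) * φ (chi S * f))
    rw [h, map_smul, RingHom.id_apply, smul_eq_mul, smul_eq_mul]
    ring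

lemma mulState_apply (φ : Linf X →ₗ[ℂ] ℂ) (S : Set X) (c : ℝ) (f : Linf X) :
    mulState φ S c f = (c : ℂ) * φ (chi S * f) := rfl

variable {φ : Linf X →ₗ[ℂ] ℂ}

set_option maxHeartbeats 1000000 in
lemma mulState_state (hst : IsStateLinf φ) {S : Set X} {t : ℝ}
    (ht : φ (chi S) = (t : ℂ)) (ht0 : 0 < t) : IsStateLinf (mulState φ S t⁻¹) := by
  constructor
  · rw [mulState_apply, mul_one, ht]
    rw [← Complex.ofReal_mul]
    rw [inv_mul_cancel₀ (ne_of_gt ht0)]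
    norm_num
  · intro f hf
    have h1 : 0 ≤ φ (chi S * f) := by
      apply hst.2
      intro x
      rw [chi_mul_apply]
      by_cases hx : x ∈ S
      · rw [chi_apply_mem hx, one_mul]; exact hf x
      · rw [chi_apply_not_mem hx, zero_mul]
    rw [mulState_apply]
    have hre := Complex.nonneg_iff.1 h1
    rw [Complex.nonneg_iff]
    constructor
    · rw [Complex.mul_re, Complex.ofReal_re, Complex.ofReal_im, zero_mul, sub_zero]
      exact mul_nonneg (inv_nonneg.2 (le_of_lt ht0)) hre.1
    · rw [Complex.mul_im, Complex.ofReal_re, Complex.ofReal_im, zero_mul, add_zero, ← hre.2,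
        mul_zero]

lemma phi_decomp (S : Set X) (f : Linf X) : φ (chi S * f) + φ (chi Sᶜ * f) = φ f := by
  rw [← map_add]
  congr 1
  apply Subtype.ext
  funext x
  rw [lp.coeFn_add, Pi.add_apply, chi_mul_apply, chi_mul_apply]
  by_cases hx : x ∈ S
  · rw [chi_apply_mem hx, chi_apply_not_mem (by simpa using hx), one_mul, zero_mul, add_zero]
  · rw [chi_apply_not_mem hx, chi_apply_mem (by simpa using hx), zero_mul, one_mul, zero_add]

set_option maxHeartbeats 1000000 in
lemma pure_two_valued (hpure : φ ∈ Set.extremePoints ℝ {ψ : Linf X →ₗ[ℂ] ℂ | IsStateLinf ψ})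
    (S : Set X) : (φ (chi S)).re = 0 ∨ (φ (chi S)).re = 1 := by
  have hst : IsStateLinf φ := hpure.1
  set t := (φ (chi S)).re with ht
  by_contra hne
  push_neg at hne
  have hmem := state_chi_mem_unit hst S
  have ht0 : 0 < t := lt_of_le_of_ne hmem.2.1 (Ne.symm hne.1)
  have ht1 : t < 1 := lt_of_le_of_ne hmem.2.2 hne.2
  have hφS : φ (chi S) = (t : ℂ) := state_chi_real hst S
  have hφSc : φ (chi Sᶜ) = ((1 - t : ℝ) : ℂ) := by
    have hsum : φ (chi S) + φ (chi Sᶜ) = 1 := by rw [← map_add, chi_add_compl, hst.1]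
    rw [hφS] at hsum
    push_cast
    linear_combination hsum
  set ψ₁ := mulState φ S t⁻¹ with hψ₁
  set ψ₂ := mulState φ Sᶜ (1 - t)⁻¹ with hψ₂
  have hs1 : IsStateLinf ψ₁ := mulState_state hst hφS ht0
  have hs2 : IsStateLinf ψ₂ := mulState_state hst hφSc (by linarith)
  have hseg : φ ∈ openSegment ℝ ψ₁ ψ₂ := by
    refine ⟨t, 1 - t, ht0, by linarith, by ring, ?_⟩
    apply LinearMap.ext
    intro f
    rw [LinearMap.add_apply, LinearMap.smul_apply, LinearMap.smul_apply, hψ₁, hψ₂,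
      mulState_apply, mulState_apply, Complex.real_smul, Complex.real_smul,
      ← mul_assoc, ← mul_assoc, ← Complex.ofReal_mul, ← Complex.ofReal_mul,
      mul_inv_cancel₀ (ne_of_gt ht0), mul_inv_cancel₀ (by linarith : (1 : ℝ) - t ≠ 0),
      Complex.ofReal_one, one_mul, one_mul]
    exact phi_decomp S f
  have hψ1eq := hpure.2 hs1 hs2 hseg
  have hone : ψ₁ (chi S) = 1 := by
    rw [hψ₁, mulState_apply, chi_mul_chi, hφS, ← Complex.ofReal_mul,
      inv_mul_cancel₀ (ne_of_gt ht0)]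
    norm_num
  rw [hψ1eq, hφS] at hone
  have : t = 1 := by exact_mod_cast hone
  linarith

-- SECTION 9: transfer lemmas
lemma ufState_additive {μ : Set X → ℝ} (hμ : IsFAProb μ) (h2 : ∀ S : Set X, μ S = 0 ∨ μ S = 1)
    {ι : Type} (S : ι → Set X) (hadd : μ (⋃ i, S i) = ∑' i, μ (S i)) :
    ufState (ufOf hμ h2) (chi (⋃ i, S i)) = ∑' i, ufState (ufOf hμ h2) (chi (S i)) := by
  rw [ufState_ufOf_chi, hadd, Complex.ofReal_tsum]
  exact tsum_congr (fun i => (ufState_ufOf_chi hμ h2 (S i)).symm)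

lemma ufState_singular {μ : Set X → ℝ} (hμ : IsFAProb μ) (h2 : ∀ S : Set X, μ S = 0 ∨ μ S = 1)
    (hvs : ∀ x : X, μ {x} = 0) (f : Linf X)
    (hfin : (Function.support fun x => f x).Finite) : ufState (ufOf hμ h2) f = 0 := by
  have hT : ufState (ufOf hμ h2) (chi (Function.support fun x => f x)) = 0 := by
    apply ufState_chi_not_mem
    rw [mem_ufOf, mu_finite_zero hμ hvs _ hfin]
    norm_num
  apply state_supported_zero (ufState_isState _) hT
  intro x hx
  exact not_not.1 (by simpa [Function.mem_support] using hx)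

lemma state_chi_tsum {φ : Linf X →ₗ[ℂ] ℂ} (hst : IsStateLinf φ) {ι : Type} (S : ι → Set X)
    (hadd : φ (chi (⋃ i, S i)) = ∑' i, φ (chi (S i))) :
    (φ (chi (⋃ i, S i))).re = ∑' i, (φ (chi (S i))).re := by
  have h2 : ∀ i, φ (chi (S i)) = (((φ (chi (S i))).re : ℝ) : ℂ) := fun i => state_chi_real hst _
  have h3 : (∑' i, φ (chi (S i))) = (((∑' i, (φ (chi (S i))).re : ℝ)) : ℂ) := by
    rw [Complex.ofReal_tsum]
    exact tsum_congr h2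
  rw [hadd, h3, Complex.ofReal_re]

end QMC

/-- Proposition 3 (ii) and (iv) of "Quantum measurable cardinals": an uncountable cardinal `κ`
is Ulam measurable iff there is a singular countably additive pure state on `l^∞(κ)`, and
measurable iff there is a singular `<κ`-additive pure state on `l^∞(κ)`. -/
theorem measurable_iff_singular_pure_state_linf (κ : Cardinal.{0}) (hκ : Cardinal.aleph0 < κ)
    (X : Type) (hX : Cardinal.mk X = κ) :
    ((∃ μ : Set X → ℝ, IsFAProb μ ∧ TwoValuedMeas μ ∧ CountablyAdditiveMeas μ ∧
        VanishesOnSingletons μ) ↔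
      (∃ φ : Linf X →ₗ[ℂ] ℂ, IsPureLinf φ ∧ SingularLinf φ ∧ CountablyAdditiveLinf φ)) ∧
    ((∃ μ : Set X → ℝ, IsFAProb μ ∧ TwoValuedMeas μ ∧ KappaAdditiveMeas κ μ ∧
        VanishesOnSingletons μ) ↔
      (∃ φ : Linf X →ₗ[ℂ] ℂ, IsPureLinf φ ∧ SingularLinf φ ∧ KappaAdditiveLinf κ φ)) := by
  have fwd : ∀ μ : Set X → ℝ, IsFAProb μ → TwoValuedMeas μ → VanishesOnSingletons μ →
      ∃ φ : Linf X →ₗ[ℂ] ℂ, IsPureLinf φ ∧ SingularLinf φ ∧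
        (∀ (ι : Type) (S : ι → Set X), μ (⋃ i, S i) = ∑' i, μ (S i) →
          φ (chi (⋃ i, S i)) = ∑' i, φ (chi (S i))) := by
    intro μ hμ h2 hvs
    refine ⟨QMC.ufState (QMC.ufOf hμ h2), QMC.ufState_pure _, ?_, ?_⟩
    · intro f hfin
      exact QMC.ufState_singular hμ h2 hvs f hfin
    · intro ι S hadd
      exact QMC.ufState_additive hμ h2 S hadd
  have bwd : ∀ φ : Linf X →ₗ[ℂ] ℂ, IsPureLinf φ → SingularLinf φ →
      (IsFAProb (fun S => (φ (chi S)).re) ∧ TwoValuedMeas (fun S => (φ (chi S)).re) ∧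
       VanishesOnSingletons (fun S => (φ (chi S)).re)) := by
    intro φ hpure hsing
    have hst : IsStateLinf φ := hpure.1
    refine ⟨⟨fun S => (QMC.state_chi_mem_unit hst S).2.1, ?_, ?_⟩, ?_, ?_⟩
    · show (φ (chi Set.univ)).re = 1
      rw [QMC.chi_univ, hst.1, Complex.one_re]
    · intro S T hST
      show (φ (chi (S ∪ T))).re = (φ (chi S)).re + (φ (chi T)).re
      rw [QMC.chi_union (Set.disjoint_iff_inter_eq_empty.2 hST), map_add, Complex.add_re]
    · intro S
      exact QMC.pure_two_valued hpure S
    · intro x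
      show (φ (chi {x})).re = 0
      have hfin : (Function.support fun y => chi {x} y).Finite := by
        apply Set.Finite.subset (Set.finite_singleton x)
        intro y hy
        by_contra hyx
        exact hy (QMC.chi_apply_not_mem (by simpa using hyx))
      rw [hsing (chi {x}) hfin, Complex.zero_re]
  constructor
  · constructor
    · rintro ⟨μ, hμ, h2, hca, hvs⟩
      obtain ⟨φ, hp, hs, hadd⟩ := fwd μ hμ h2 hvs
      exact ⟨φ, hp, hs, fun S hdisj => hadd ℕ S (hca S hdisj)⟩
    · rintro ⟨φ, hpure, hsing, hca⟩
      have hst : IsStateLinf φ := hpure.1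
      obtain ⟨h1, h2, h3⟩ := bwd φ hpure hsing
      refine ⟨fun S => (φ (chi S)).re, h1, h2, ?_, h3⟩
      intro S hdisj
      exact QMC.state_chi_tsum hst S (hca S hdisj)
  · constructor
    · rintro ⟨μ, hμ, h2, hka, hvs⟩
      obtain ⟨φ, hp, hs, hadd⟩ := fwd μ hμ h2 hvs
      exact ⟨φ, hp, hs, fun ι S hι hdisj => hadd ι S (hka ι S hι hdisj)⟩
    · rintro ⟨φ, hpure, hsing, hka⟩
      have hst : IsStateLinf φ := hpure.1
      obtain ⟨h1, h2, h3⟩ := bwd φ hpure hsing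
      refine ⟨fun S => (φ (chi S)).re, h1, h2, ?_, h3⟩
      intro ι S hι hdisj
      exact QMC.state_chi_tsum hst S (hka ι S hι hdisj)
end
end

section
/- Let κ be an uncountable cardinal. Then κ is Ulam real-valued measurable if and only if there is a singular countably additive state on B(l²(κ)). -/
open scoped ComplexOrder

noncomputable section

/-- The Hilbert space `l²(X)`. -/
abbrev L2 (X : Type) := lp (fun _ : X => ℂ) 2

/-- The standard orthonormal basis vector `e_α` of `l²(X)`. -/
def stdBasis {X : Type} (α : X) : L2 X :=
  letI := Classical.decEq X
  lp.single 2 α 1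

variable {H : Type} [NormedAddCommGroup H] [InnerProductSpace ℂ H] [CompleteSpace H]

/-- A state on `B(H)`: a linear functional with `φ(1) = 1` which is nonnegative on
positive operators. -/
def IsStateB (φ : (H →L[ℂ] H) →ₗ[ℂ] ℂ) : Prop :=
  φ 1 = 1 ∧ ∀ x : H →L[ℂ] H, (∀ v : H, 0 ≤ (inner ℂ (x v) v : ℂ)) → 0 ≤ φ x

/-- A projection in `B(H)`: a self-adjoint idempotent. -/
def IsProjB (p : H →L[ℂ] H) : Prop := star p = p ∧ p * p = p

/-- The orthogonal projection of `H` onto the closed linear span of the set `s`. -/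
def projCLM (s : Set H) : H →L[ℂ] H :=
  haveI : CompleteSpace ((Submodule.span ℂ s).topologicalClosure) :=
    (Submodule.isClosed_topologicalClosure _).completeSpace_coe
  ((Submodule.span ℂ s).topologicalClosure.subtypeL).comp
    (Submodule.orthogonalProjection (Submodule.span ℂ s).topologicalClosure)

/-- A singular state on `B(H)`: it vanishes on all compact operators. -/
def SingularB (φ : (H →L[ℂ] H) →ₗ[ℂ] ℂ) : Prop :=
  ∀ x : H →L[ℂ] H, IsCompactOperator ⇑x → φ x = 0

/-- A countably additive state on `B(H)`: `φ(⋁ pₙ) = ∑ φ(pₙ)` for every countable family of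
mutually orthogonal projections, where `⋁ pₙ` is the orthogonal projection onto the closed
linear span of the union of the ranges. -/
def CountablyAdditiveB (φ : (H →L[ℂ] H) →ₗ[ℂ] ℂ) : Prop :=
  ∀ p : ℕ → H →L[ℂ] H, (∀ n, IsProjB (p n)) →
    (Pairwise fun m n => p m * p n = 0) →
    φ (projCLM (⋃ n, Set.range ⇑(p n))) = ∑' n, φ (p n)

set_option linter.unusedSectionVars false
set_option linter.unusedVariables false

section HilbertLemmas
variable {H : Type} [NormedAddCommGroup H] [InnerProductSpace ℂ H] [CompleteSpace H]

local notation "⟪" x ", " y "⟫" => @inner ℂ _ _ x y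

lemma IsProjB.adjoint_eq {p : H →L[ℂ] H} (hp : IsProjB p) :
    ContinuousLinearMap.adjoint p = p := by
  rw [← ContinuousLinearMap.star_eq_adjoint]; exact hp.1

lemma IsProjB.inner_left {p : H →L[ℂ] H} (hp : IsProjB p) (v w : H) :
    ⟪p v, w⟫ = ⟪v, p w⟫ := by
  conv_lhs => rw [← hp.adjoint_eq]
  rw [ContinuousLinearMap.adjoint_inner_left]

lemma IsProjB.apply_apply {p : H →L[ℂ] H} (hp : IsProjB p) (v : H) : p (p v) = p v := by
  have := congrFun (congrArg (fun q : H →L[ℂ] H => (q : H → H)) hp.2) v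
  simpa [ContinuousLinearMap.mul_apply] using this

lemma IsProjB.inner_apply_self {p : H →L[ℂ] H} (hp : IsProjB p) (v : H) :
    ⟪p v, v⟫ = ((‖p v‖ ^ 2 : ℝ) : ℂ) := by
  calc ⟪p v, v⟫ = ⟪p (p v), v⟫ := by rw [hp.apply_apply]
    _ = ⟪p v, p v⟫ := by rw [hp.inner_left (p v) v]
    _ = ((‖p v‖ ^ 2 : ℝ) : ℂ) := by
        rw [inner_self_eq_norm_sq_to_K]
        norm_cast

variable {p : ℕ → H →L[ℂ] H} (hp : ∀ n, IsProjB (p n))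
  (horth : Pairwise fun m n => p m * p n = 0)

include hp horth

lemma orth_apply {m n : ℕ} (h : m ≠ n) (v w : H) : ⟪p m v, p n w⟫ = 0 := by
  rw [(hp m).inner_left]
  have : p m (p n w) = 0 := by
    have := congrFun (congrArg (fun q : H →L[ℂ] H => (q : H → H)) (horth h)) w
    simpa [ContinuousLinearMap.mul_apply] using this
  rw [this, inner_zero_right]

lemma norm_sum_sq (v : H) (s : Finset ℕ) :
    ((‖∑ n ∈ s, p n v‖ ^ 2 : ℝ) : ℂ) = ∑ n ∈ s, ((‖p n v‖ ^ 2 : ℝ) : ℂ) := by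
  have : ⟪∑ m ∈ s, p m v, ∑ n ∈ s, p n v⟫ = ∑ n ∈ s, ((‖p n v‖ ^ 2 : ℝ) : ℂ) := by
    rw [sum_inner]
    refine Finset.sum_congr rfl fun m hm => ?_
    rw [inner_sum]
    rw [Finset.sum_eq_single m]
    · rw [inner_self_eq_norm_sq_to_K]; norm_cast
    · intro n hn hnm; exact orth_apply hp horth (Ne.symm hnm) v v
    · intro h; exact absurd hm h
  rw [← this, inner_self_eq_norm_sq_to_K]; norm_cast

lemma sum_inner_self (v : H) (s : Finset ℕ) :
    ⟪(∑ n ∈ s, p n) v, v⟫ = ∑ n ∈ s, ((‖p n v‖ ^ 2 : ℝ) : ℂ) := by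
  rw [ContinuousLinearMap.sum_apply, sum_inner]
  exact Finset.sum_congr rfl fun n _ => (hp n).inner_apply_self v

lemma bessel_finset (v : H) (s : Finset ℕ) :
    ∑ n ∈ s, ‖p n v‖ ^ 2 ≤ ‖v‖ ^ 2 := by
  set q : H →L[ℂ] H := ∑ n ∈ s, p n with hq
  have h1 : ⟪q v, v⟫ = ∑ n ∈ s, ((‖p n v‖ ^ 2 : ℝ) : ℂ) := sum_inner_self hp horth v s
  have h2 : ((‖q v‖ ^ 2 : ℝ) : ℂ) = ∑ n ∈ s, ((‖p n v‖ ^ 2 : ℝ) : ℂ) := by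
    have := norm_sum_sq hp horth v s
    rw [← this]
    congr 1
    rw [hq, ContinuousLinearMap.sum_apply]
  have hqv : ‖q v‖ ^ 2 = ∑ n ∈ s, ‖p n v‖ ^ 2 := by
    have := h2
    rw [← Complex.ofReal_sum] at this
    exact_mod_cast this
  have hle : ‖q v‖ ≤ ‖v‖ := by
    rcases eq_or_lt_of_le (norm_nonneg (q v)) with h0 | h0
    · rw [← h0]; exact norm_nonneg v
    · have hcs : ‖⟪q v, v⟫‖ ≤ ‖q v‖ * ‖v‖ := norm_inner_le_norm _ _
      have : ⟪q v, v⟫ = ((‖q v‖ ^ 2 : ℝ) : ℂ) := by rw [h1, ← h2]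
      rw [this] at hcs
      have : ‖q v‖ ^ 2 ≤ ‖q v‖ * ‖v‖ := by
        calc ‖q v‖ ^ 2 = ‖((‖q v‖ ^ 2 : ℝ) : ℂ)‖ := by
              rw [Complex.norm_real, Real.norm_of_nonneg (sq_nonneg _)]
          _ ≤ ‖q v‖ * ‖v‖ := hcs
      nlinarith
  calc ∑ n ∈ s, ‖p n v‖ ^ 2 = ‖q v‖ ^ 2 := hqv.symm
    _ ≤ ‖v‖ ^ 2 := by nlinarith [norm_nonneg (q v), norm_nonneg v]

lemma summable_norm_sq (v : H) : Summable fun n => ‖p n v‖ ^ 2 :=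
  summable_of_sum_le (fun n => sq_nonneg _) (bessel_finset hp horth v)

lemma tsum_norm_sq_le (v : H) : ∑' n, ‖p n v‖ ^ 2 ≤ ‖v‖ ^ 2 :=
  Summable.tsum_le_of_sum_le (summable_norm_sq hp horth v) (bessel_finset hp horth v)

lemma summable_apply (v : H) : Summable fun n => p n v := by
  rw [summable_iff_vanishing_norm]
  intro ε hε
  have hsum := summable_norm_sq hp horth v
  rw [summable_iff_vanishing_norm] at hsum
  obtain ⟨s, hs⟩ := hsum (ε ^ 2) (by positivity)
  refine ⟨s, fun t ht => ?_⟩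
  have h1 : ∑ n ∈ t, ‖p n v‖ ^ 2 < ε ^ 2 := by
    have := hs t ht
    have hnn : ∑ n ∈ t, ‖p n v‖ ^ 2 = ‖∑ n ∈ t, ‖p n v‖ ^ 2‖ := by
      rw [Real.norm_of_nonneg (Finset.sum_nonneg fun _ _ => sq_nonneg _)]
    rw [hnn]; exact this
  have h2 : ‖∑ n ∈ t, p n v‖ ^ 2 = ∑ n ∈ t, ‖p n v‖ ^ 2 := by
    have := norm_sum_sq hp horth v t
    rw [← Complex.ofReal_sum] at this
    exact_mod_cast this
  have : ‖∑ n ∈ t, p n v‖ ^ 2 < ε ^ 2 := by rw [h2]; exact h1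
  nlinarith [norm_nonneg (∑ n ∈ t, p n v)]

end HilbertLemmas

section KeyLemma
variable {H : Type} [NormedAddCommGroup H] [InnerProductSpace ℂ H] [CompleteSpace H]

local notation "⟪" x ", " y "⟫" => @inner ℂ _ _ x y

variable {p : ℕ → H →L[ℂ] H} (hp : ∀ n, IsProjB (p n))
  (horth : Pairwise fun m n => p m * p n = 0)

include hp horth

lemma apply_tsum_apply (m : ℕ) (v : H) : p m (∑' n, p n v) = p m v := by
  rw [ContinuousLinearMap.map_tsum _ (summable_apply hp horth v)]
  rw [tsum_eq_single m]
  · exact (hp m).apply_apply v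
  · intro n hnm
    have := congrFun (congrArg (fun q : H →L[ℂ] H => (q : H → H)) (horth hnm.symm)) v
    simpa [ContinuousLinearMap.mul_apply] using this

lemma projCLM_apply_eq_tsum (v : H) :
    projCLM (⋃ n, Set.range ⇑(p n)) v = ∑' n, p n v := by
  set s : Set H := ⋃ n, Set.range ⇑(p n) with hs
  set K := (Submodule.span ℂ s).topologicalClosure with hK
  haveI : CompleteSpace K := (Submodule.isClosed_topologicalClosure _).completeSpace_coe
  set w : H := ∑' n, p n v with hw
  have hwK : w ∈ K := by
    have htend := (summable_apply hp horth v).hasSum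
    refine (Submodule.isClosed_topologicalClosure (Submodule.span ℂ s)).mem_of_tendsto htend
      (Filter.Eventually.of_forall fun t => ?_)
    refine Submodule.sum_mem _ fun n _ => ?_
    exact (Submodule.span ℂ s).le_topologicalClosure
      (Submodule.subset_span (Set.mem_iUnion.2 ⟨n, Set.mem_range_self v⟩))
  have hvwo : v - w ∈ Kᗮ := by
    rw [Submodule.mem_orthogonal]
    intro u hu
    have hset : ∀ u' ∈ s, ⟪u', v - w⟫ = 0 := by
      rintro u' hu'
      rw [hs] at hu'
      obtain ⟨n, y, rfl⟩ := Set.mem_iUnion.1 hu'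
      rw [← inner_conj_symm]
      rw [← (hp n).inner_left (v - w) (y : H)]
      have : p n (v - w) = 0 := by
        rw [map_sub, apply_tsum_apply hp horth n v, sub_self]
      rw [this, inner_zero_left, map_zero]
    have hspan : ∀ u' ∈ Submodule.span ℂ s, ⟪u', v - w⟫ = 0 := by
      intro u' hu'
      induction hu' using Submodule.span_induction with
      | mem x hx => exact hset x hx
      | zero => exact inner_zero_left _
      | add x y _ _ hx hy => rw [inner_add_left, hx, hy, add_zero]
      | smul c x _ hx => rw [inner_smul_left, hx, mul_zero]
    -- u ∈ closure of span
    have huc : u ∈ closure ((Submodule.span ℂ s : Submodule ℂ H) : Set H) := by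
      rw [hK] at hu
      exact hu
    have hcl : closure ((Submodule.span ℂ s : Submodule ℂ H) : Set H) ⊆
        {u' | ⟪u', v - w⟫ = 0} := by
      refine closure_minimal (fun u' hu' => hspan u' hu') ?_
      exact isClosed_eq (continuous_id.inner continuous_const) continuous_const
    exact hcl huc
  have : (Submodule.orthogonalProjection K v : H) = w :=
    Submodule.eq_starProjection_of_mem_orthogonal hwK hvwo
  simpa [projCLM, ← hK] using this

end KeyLemma

section Diag
open scoped ENNReal Classical
variable {X : Type}

local notation "⟪" x ", " y "⟫" => @inner ℂ _ _ x y

lemma two_toReal : ((2 : ℝ≥0∞).toReal) = 2 := by norm_num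

lemma memℓp_indicator (S : Set X) (f : L2 X) :
    Memℓp (fun α => if α ∈ S then f α else 0) 2 := by
  apply memℓp_gen
  have hf : Summable fun α => ‖f α‖ ^ (2 : ℝ≥0∞).toReal := (lp.memℓp f).summable (by
    rw [two_toReal]; norm_num)
  refine hf.of_nonneg_of_le (fun α => ?_) (fun α => ?_)
  · positivity
  · rw [two_toReal]
    by_cases h : α ∈ S <;> simp [h] <;> positivity

def diagProjL (S : Set X) : L2 X →ₗ[ℂ] L2 X where
  toFun f := ⟨fun α => if α ∈ S then f α else 0, memℓp_indicator S f⟩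
  map_add' f g := by
    ext α
    change (if α ∈ S then f α + g α else 0)
        = (if α ∈ S then f α else 0) + (if α ∈ S then g α else 0)
    by_cases h : α ∈ S <;> simp [h]
  map_smul' c f := by
    ext α
    change (if α ∈ S then c • f α else 0) = c • (if α ∈ S then f α else 0)
    by_cases h : α ∈ S <;> simp [h]

lemma diagProjL_apply (S : Set X) (f : L2 X) (α : X) :
    (diagProjL S f : ∀ _ : X, ℂ) α = if α ∈ S then f α else 0 := rfl

lemma diagProjL_norm_le (S : Set X) (f : L2 X) : ‖diagProjL S f‖ ≤ ‖f‖ := by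
  have h2 : (0:ℝ) < (2 : ℝ≥0∞).toReal := by rw [two_toReal]; norm_num
  have hle : ‖diagProjL S f‖ ^ (2 : ℝ≥0∞).toReal ≤ ‖f‖ ^ (2 : ℝ≥0∞).toReal := by
    rw [lp.norm_rpow_eq_tsum h2, lp.norm_rpow_eq_tsum h2]
    refine Summable.tsum_le_tsum (fun α => ?_) ?_ ((lp.memℓp f).summable h2)
    · rw [diagProjL_apply]
      by_cases h : α ∈ S <;> simp [h, Real.rpow_natCast] <;> positivity
    · refine ((lp.memℓp f).summable h2).of_nonneg_of_le (fun α => by positivity) (fun α => ?_)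
      rw [diagProjL_apply]
      by_cases h : α ∈ S <;> simp [h, Real.rpow_natCast] <;> positivity
  exact (Real.rpow_le_rpow_iff (norm_nonneg _) (norm_nonneg _) h2).1 hle

def diagProj (S : Set X) : L2 X →L[ℂ] L2 X :=
  LinearMap.mkContinuous (diagProjL S) 1 (fun f => by
    rw [one_mul]; exact diagProjL_norm_le S f)

lemma diagProj_apply (S : Set X) (f : L2 X) (α : X) :
    (diagProj S f : ∀ _ : X, ℂ) α = if α ∈ S then f α else 0 := rfl

lemma diagProj_univ : diagProj (Set.univ : Set X) = 1 := by
  ext f α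
  simp [diagProj_apply]

lemma diagProj_mul (S T : Set X) : diagProj S * diagProj T = diagProj (S ∩ T) := by
  ext f α
  simp only [ContinuousLinearMap.mul_apply, diagProj_apply]
  by_cases hS : α ∈ S <;> by_cases hT : α ∈ T <;> simp [hS, hT, Set.mem_inter_iff]

lemma diagProj_empty : diagProj (∅ : Set X) = 0 := by
  ext f α
  simp [diagProj_apply]

lemma diagProj_inner (S : Set X) (f g : L2 X) : ⟪diagProj S f, g⟫ = ⟪f, diagProj S g⟫ := by
  rw [lp.inner_eq_tsum, lp.inner_eq_tsum]
  refine tsum_congr fun α => ?_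
  rw [diagProj_apply, diagProj_apply]
  by_cases h : α ∈ S <;> simp [h]

lemma diagProj_isProj (S : Set X) : IsProjB (diagProj S) := by
  constructor
  · rw [ContinuousLinearMap.star_eq_adjoint]
    exact ((ContinuousLinearMap.eq_adjoint_iff (diagProj S) (diagProj S)).2
      fun f g => diagProj_inner S f g).symm
  · rw [diagProj_mul, Set.inter_self]

lemma diagProj_union {S T : Set X} (h : S ∩ T = ∅) :
    diagProj (S ∪ T) = diagProj S + diagProj T := by
  ext f α
  have : α ∉ S ∨ α ∉ T := by
    by_contra hc
    push_neg at hc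
    have : α ∈ S ∩ T := ⟨hc.1, hc.2⟩
    rw [h] at this
    exact this
  simp only [ContinuousLinearMap.add_apply, lp.coeFn_add, Pi.add_apply, diagProj_apply]
  by_cases hS : α ∈ S <;> by_cases hT : α ∈ T <;> simp [hS, hT] <;> tauto

end Diag

section Std
open scoped ENNReal Classical
variable {X : Type}

local notation "⟪" x ", " y "⟫" => @inner ℂ _ _ x y

lemma inner_stdBasis_left (α : X) (f : L2 X) : ⟪(stdBasis α : L2 X), f⟫ = f α := by
  letI := Classical.decEq X
  rw [stdBasis, lp.inner_single_left]
  simp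

lemma inner_stdBasis_right (α : X) (f : L2 X) : ⟪f, (stdBasis α : L2 X)⟫ = starRingEnd ℂ (f α) := by
  letI := Classical.decEq X
  rw [stdBasis, lp.inner_single_right]
  simp

lemma norm_stdBasis (α : X) : ‖(stdBasis α : L2 X)‖ = 1 := by
  have h : ⟪(stdBasis α : L2 X), stdBasis α⟫ = ((‖(stdBasis α : L2 X)‖ ^ 2 : ℝ) : ℂ) := by
    rw [inner_self_eq_norm_sq_to_K]
    norm_cast
  rw [inner_stdBasis_left] at h
  letI := Classical.decEq X
  have h2 : (stdBasis α : L2 X) α = 1 := by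
    rw [stdBasis]; exact lp.single_apply_self 2 α 1
  rw [h2] at h
  have : (1 : ℝ) = ‖(stdBasis α : L2 X)‖ ^ 2 := by exact_mod_cast h
  nlinarith [norm_nonneg (stdBasis α : L2 X)]

/-- Coordinate evaluation as a continuous linear functional. -/
def evalCLM (α : X) : L2 X →L[ℂ] ℂ :=
  LinearMap.mkContinuous
    { toFun := fun f => f α
      map_add' := fun f g => by
        have : (↑(f + g) : ∀ _ : X, ℂ) α = f α + g α := by rw [lp.coeFn_add]; rfl
        exact this
      map_smul' := fun c f => by
        have : (↑(c • f) : ∀ _ : X, ℂ) α = c • (f α) := by rw [lp.coeFn_smul]; rfl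
        exact this } 1
    (fun f => by
      rw [one_mul]
      exact lp.norm_apply_le_norm two_ne_zero f α)

lemma evalCLM_apply (α : X) (f : L2 X) : evalCLM α f = f α := rfl

lemma diagProj_orth {S : ℕ → Set X} (hd : Pairwise (Function.onFun Disjoint S)) :
    Pairwise fun m n => diagProj (S m) * diagProj (S n) = 0 := by
  intro m n hmn
  rw [diagProj_mul, Set.disjoint_iff_inter_eq_empty.1 (hd hmn), diagProj_empty]

lemma tsum_diagProj_apply {S : ℕ → Set X} (hd : Pairwise (Function.onFun Disjoint S))
    (v : L2 X) : ∑' n, diagProj (S n) v = diagProj (⋃ n, S n) v := by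
  have hsum : Summable fun n => diagProj (S n) v :=
    summable_apply (fun n => diagProj_isProj (S n)) (diagProj_orth hd) v
  have hco : ∀ α : X, (∑' n, diagProj (S n) v) α = ∑' n, (diagProj (S n) v) α := by
    intro α
    have := ContinuousLinearMap.map_tsum (evalCLM α) hsum
    rw [evalCLM_apply] at this
    rw [this]
    rfl
  apply lp.ext
  funext α
  rw [hco α]
  rw [diagProj_apply]
  by_cases hα : α ∈ ⋃ n, S n
  · obtain ⟨m, hm⟩ := Set.mem_iUnion.1 hα
    rw [if_pos hα]
    rw [tsum_eq_single m]
    · rw [diagProj_apply, if_pos hm]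
    · intro n hnm
      rw [diagProj_apply, if_neg]
      intro hn
      exact Set.disjoint_left.1 (hd hnm) hn hm
  · rw [if_neg hα]
    have : ∀ n, (diagProj (S n) v) α = 0 := by
      intro n
      rw [diagProj_apply, if_neg]
      exact fun hn => hα (Set.mem_iUnion.2 ⟨n, hn⟩)
    simp [this]

lemma projCLM_diagProj {S : ℕ → Set X} (hd : Pairwise (Function.onFun Disjoint S)) :
    projCLM (⋃ n, Set.range ⇑(diagProj (S n))) = diagProj (⋃ n, S n) := by
  ext v
  rw [projCLM_apply_eq_tsum (fun n => diagProj_isProj (S n)) (diagProj_orth hd) v]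
  exact congrFun (congrArg _ (tsum_diagProj_apply hd v)) _

lemma diagProj_singleton_apply (x : X) (v : L2 X) :
    diagProj ({x} : Set X) v = v x • stdBasis x := by
  letI := Classical.decEq X
  apply lp.ext
  funext β
  rw [lp.coeFn_smul, Pi.smul_apply, diagProj_apply]
  rw [stdBasis]
  by_cases h : β = x
  · subst h
    rw [if_pos (Set.mem_singleton β), lp.single_apply_self]
    simp
  · rw [if_neg (by simpa using h), lp.single_apply_ne 2 x 1 h]
    simp

lemma isCompact_diagProj_singleton (x : X) :
    IsCompactOperator ⇑(diagProj ({x} : Set X)) := by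
  refine ⟨(fun c : ℂ => c • (stdBasis x : L2 X)) '' Metric.closedBall 0 1, ?_, ?_⟩
  · exact (isCompact_closedBall 0 1).image (by fun_prop)
  · refine Filter.mem_of_superset (Metric.closedBall_mem_nhds 0 one_pos) ?_
    intro v hv
    refine ⟨v x, ?_, (diagProj_singleton_apply x v).symm⟩
    rw [Metric.mem_closedBall, dist_zero_right]
    calc ‖v x‖ ≤ ‖v‖ := lp.norm_apply_le_norm two_ne_zero v x
      _ ≤ 1 := by simpa [dist_zero_right] using hv

end Std

section Forward
open MeasureTheory Filter
open scoped ENNReal Classical Topology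
variable {X : Type}

local notation "⟪" x ", " y "⟫" => @inner ℂ _ _ x y

lemma mu_empty {μ0 : Set X → ℝ} (hFA : IsFAProb μ0) : μ0 ∅ = 0 := by
  have := hFA.2.2 ∅ ∅ (by simp)
  simp at this
  linarith

lemma mu_mono {μ0 : Set X → ℝ} (hFA : IsFAProb μ0) {S T : Set X} (h : S ⊆ T) : μ0 S ≤ μ0 T := by
  have hd : S ∩ (T \ S) = ∅ := Set.inter_diff_self S T
  have hm := hFA.2.2 S (T \ S) hd
  rw [Set.union_diff_cancel h] at hm
  have := hFA.1 (T \ S)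
  linarith

lemma mu_finset_sum {μ0 : Set X → ℝ} (hFA : IsFAProb μ0) (f : ℕ → Set X)
    (hd : Pairwise (Function.onFun Disjoint f)) (s : Finset ℕ) :
    μ0 (⋃ i ∈ s, f i) = ∑ i ∈ s, μ0 (f i) := by
  induction s using Finset.cons_induction with
  | empty => simpa using mu_empty hFA
  | cons a s ha ih =>
    rw [Finset.sum_cons, ← ih]
    have hU : (⋃ i ∈ Finset.cons a s ha, f i) = f a ∪ ⋃ i ∈ s, f i := by
      rw [Finset.cons_eq_insert]
      exact Finset.set_biUnion_insert a s f
    have hdisj : f a ∩ ⋃ i ∈ s, f i = ∅ := by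
      ext b
      simp only [Set.mem_inter_iff, Set.mem_iUnion, Set.mem_empty_iff_false, iff_false, not_and]
      rintro hb ⟨i, hi, hbi⟩
      exact Set.disjoint_left.1 (hd (show a ≠ i from fun h => ha (by rw [h]; exact hi))) hb hbi
    rw [hU, hFA.2.2 _ _ hdisj]

set_option maxHeartbeats 1000000 in
theorem forward_direction (μ0 : Set X → ℝ) (hFA : IsFAProb μ0)
    (hCA : CountablyAdditiveMeas μ0) (hV : VanishesOnSingletons μ0) :
    ∃ φ : (L2 X →L[ℂ] L2 X) →ₗ[ℂ] ℂ, IsStateB φ ∧ SingularB φ ∧ CountablyAdditiveB φ := by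
  letI : MeasurableSpace X := ⊤
  have hmeas : ∀ s : Set X, MeasurableSet s := fun s => trivial
  -- the measure
  have hsummable : ∀ (f : ℕ → Set X), Pairwise (Function.onFun Disjoint f) →
      Summable fun i => μ0 (f i) := by
    intro f hd
    refine summable_of_sum_range_le (c := 1) (fun n => hFA.1 _) (fun n => ?_)
    rw [← mu_finset_sum hFA f hd (Finset.range n)]
    calc μ0 (⋃ i ∈ Finset.range n, f i) ≤ μ0 Set.univ := mu_mono hFA (Set.subset_univ _)
      _ = 1 := hFA.2.1
  set ν : Measure X := Measure.ofMeasurable (fun s _ => ENNReal.ofReal (μ0 s))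
    (by simpa using congrArg ENNReal.ofReal (mu_empty hFA))
    (by
      intro f hf hd
      show ENNReal.ofReal (μ0 (⋃ i, f i)) = ∑' i, ENNReal.ofReal (μ0 (f i))
      have h1 : μ0 (⋃ i, f i) = ∑' i, μ0 (f i) := hCA f hd
      rw [h1, ENNReal.ofReal_tsum_of_nonneg (fun n => hFA.1 _) (hsummable f hd)]) with hν
  have hνs : ∀ s : Set X, ν s = ENNReal.ofReal (μ0 s) := fun s =>
    Measure.ofMeasurable_apply s (hmeas s)
  haveI : IsProbabilityMeasure ν := ⟨by rw [hνs, hFA.2.1, ENNReal.ofReal_one]⟩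
  have hν_finite_null : ∀ s : Set X, s.Finite → ν s = 0 := by
    intro s hs
    rw [← Set.biUnion_of_singleton s]
    exact (measure_biUnion_null_iff hs.countable).2 fun x _ => by
      rw [hνs, hV, ENNReal.ofReal_zero]
  -- the integrand
  have hbound : ∀ (x : L2 X →L[ℂ] L2 X) (α : X), ‖⟪stdBasis α, x (stdBasis α)⟫‖ ≤ ‖x‖ := by
    intro x α
    calc ‖⟪stdBasis α, x (stdBasis α)⟫‖ ≤ ‖(stdBasis α : L2 X)‖ * ‖x (stdBasis α)‖ :=
          norm_inner_le_norm _ _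
      _ = ‖x (stdBasis α)‖ := by rw [norm_stdBasis, one_mul]
      _ ≤ ‖x‖ * ‖(stdBasis α : L2 X)‖ := x.le_opNorm _
      _ = ‖x‖ := by rw [norm_stdBasis, mul_one]
  have hint : ∀ x : L2 X →L[ℂ] L2 X,
      Integrable (fun α => ⟪stdBasis α, x (stdBasis α)⟫) ν := by
    intro x
    refine ⟨(measurable_from_top).aestronglyMeasurable, ?_⟩
    exact HasFiniteIntegral.of_bounded (C := ‖x‖) (ae_of_all _ fun α => hbound x α)
  set φ : (L2 X →L[ℂ] L2 X) →ₗ[ℂ] ℂ :=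
    { toFun := fun x => ∫ α, ⟪stdBasis α, x (stdBasis α)⟫ ∂ν
      map_add' := fun x y => by
        simp only [ContinuousLinearMap.add_apply, inner_add_right]
        exact integral_add (hint x) (hint y)
      map_smul' := fun c x => by
        simp only [ContinuousLinearMap.smul_apply, inner_smul_right, RingHom.id_apply]
        exact integral_smul c _ } with hφ
  have hφ_apply : ∀ x : L2 X →L[ℂ] L2 X, φ x = ∫ α, ⟪stdBasis α, x (stdBasis α)⟫ ∂ν :=
    fun x => rfl
  refine ⟨φ, ⟨?_, ?_⟩, ?_, ?_⟩
  -- φ 1 = 1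
  · rw [hφ_apply]
    have : ∀ α : X, ⟪stdBasis α, (1 : L2 X →L[ℂ] L2 X) (stdBasis α)⟫ = 1 := by
      intro α
      rw [ContinuousLinearMap.one_apply, inner_stdBasis_left]
      letI := Classical.decEq X
      rw [stdBasis]
      exact lp.single_apply_self 2 α 1
    simp only [this]
    simp [integral_const, measure_univ]
  -- positivity
  · intro x hx
    rw [hφ_apply]
    have hre : ∀ α : X, ⟪stdBasis α, x (stdBasis α)⟫ =
        (((⟪stdBasis α, x (stdBasis α)⟫).re : ℝ) : ℂ) := by
      intro α
      have h0 := hx (stdBasis α)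
      rw [Complex.nonneg_iff] at h0
      have hconj : ⟪stdBasis α, x (stdBasis α)⟫ =
          starRingEnd ℂ ⟪x (stdBasis α), stdBasis α⟫ := (inner_conj_symm _ _).symm
      apply Complex.ext
      · rfl
      · rw [hconj, Complex.conj_im, ← h0.2, neg_zero]
        rfl
    calc (0:ℂ) ≤ ((∫ α, (⟪stdBasis α, x (stdBasis α)⟫).re ∂ν : ℝ) : ℂ) := by
          rw [Complex.zero_le_real]
          refine integral_nonneg fun α => ?_
          have h0 := hx (stdBasis α)
          rw [Complex.nonneg_iff] at h0
          rw [show ⟪stdBasis α, x (stdBasis α)⟫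
              = starRingEnd ℂ ⟪x (stdBasis α), stdBasis α⟫ from (inner_conj_symm _ _).symm,
            Complex.conj_re]
          exact h0.1
      _ = ∫ α, ⟪stdBasis α, x (stdBasis α)⟫ ∂ν := by
          have hoi : ((∫ α, (⟪stdBasis α, x (stdBasis α)⟫).re ∂ν : ℝ) : ℂ)
              = ∫ α, (((⟪stdBasis α, x (stdBasis α)⟫).re : ℝ) : ℂ) ∂ν :=
            (integral_ofReal (𝕜 := ℂ)).symm
          rw [hoi]
          refine integral_congr_ae (ae_of_all _ fun α => ?_)
          exact (hre α).symm
  -- singular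
  · intro x hx
    have hfin : ∀ ε : ℝ, 0 < ε → {α : X | ε ≤ ‖x (stdBasis α)‖}.Finite := by
      intro ε hε
      by_contra hinf
      have hinf : {α : X | ε ≤ ‖x (stdBasis α)‖}.Infinite := hinf
      obtain ⟨K, hK, hKmem⟩ := hx
      obtain ⟨δ, hδ, hball⟩ := Metric.mem_nhds_iff.1 hKmem
      set g : ℕ → X := fun n => ((Set.Infinite.natEmbedding _ hinf) n : X) with hg
      have hginj : Function.Injective g :=
        Subtype.coe_injective.comp ((Set.Infinite.natEmbedding _ hinf)).injective
      have hgA : ∀ n, ε ≤ ‖x (stdBasis (g n))‖ := fun n => ((Set.Infinite.natEmbedding _ hinf) n).2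
      set c : ℂ := ((δ/2 : ℝ) : ℂ) with hc
      have hmem : ∀ n, x (c • stdBasis (g n)) ∈ K := by
        intro n
        apply hball
        rw [Metric.mem_ball, dist_zero_right, norm_smul, norm_stdBasis, mul_one, hc,
          Complex.norm_real, Real.norm_of_nonneg (by linarith)]
        linarith
      obtain ⟨a, -, ψ, hψ, hlim⟩ := hK.tendsto_subseq hmem
      have ha : a = 0 := by
        refine ext_inner_left ℂ fun w => ?_
        rw [inner_zero_right]
        have h1 : Tendsto (fun k => ⟪w, x (c • stdBasis (g (ψ k)))⟫) atTop (𝓝 ⟪w, a⟫) :=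
          tendsto_const_nhds.inner hlim
        have h2 : Tendsto (fun k => ⟪w, x (c • stdBasis (g (ψ k)))⟫) atTop (𝓝 0) := by
          set u : L2 X := (ContinuousLinearMap.adjoint x) w with hu
          have heq : ∀ β : X, ⟪w, x (c • stdBasis β)⟫ = c * (starRingEnd ℂ) (u β) := by
            intro β
            have hxs : x (c • stdBasis β) = c • x (stdBasis β) := _root_.map_smul x c _
            rw [hxs, inner_smul_right]
            congr 1
            rw [← ContinuousLinearMap.adjoint_inner_left, ← hu, inner_stdBasis_right]
          simp only [heq]
          have hucoord : Tendsto (fun β : X => (u : ∀ _ : X, ℂ) β) cofinite (𝓝 0) := by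
            rw [tendsto_zero_iff_norm_tendsto_zero]
            have hsq : Summable fun β : X => ‖(u : ∀ _ : X, ℂ) β‖ ^ (2 : ℝ≥0∞).toReal :=
              (lp.memℓp u).summable (by rw [two_toReal]; norm_num)
            have h0 : Tendsto (fun β : X => ‖(u : ∀ _ : X, ℂ) β‖ ^ (2 : ℝ≥0∞).toReal)
                cofinite (𝓝 0) := hsq.tendsto_cofinite_zero
            have h3 : Tendsto ((fun r => Real.sqrt r) ∘
                  fun β : X => ‖(u : ∀ _ : X, ℂ) β‖ ^ (2 : ℝ≥0∞).toReal)
                cofinite (𝓝 (Real.sqrt 0)) := (Real.continuous_sqrt.tendsto 0).comp h0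
            rw [Real.sqrt_zero] at h3
            refine h3.congr fun β => ?_
            show Real.sqrt (‖(u : ∀ _ : X, ℂ) β‖ ^ (2 : ℝ≥0∞).toReal) = ‖(u : ∀ _ : X, ℂ) β‖
            rw [two_toReal, show ((2:ℝ)) = ((2:ℕ):ℝ) by norm_num, Real.rpow_natCast]
            exact Real.sqrt_sq (norm_nonneg _)
          have hgψ : Tendsto (fun k => g (ψ k)) atTop cofinite := by
            rw [← Nat.cofinite_eq_atTop]
            exact (hginj.comp hψ.injective).tendsto_cofinite
          have := (hucoord.comp hgψ).star
          rw [star_zero] at this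
          have := this.const_mul c
          rw [mul_zero] at this
          exact this.congr fun k => rfl
        exact tendsto_nhds_unique h1 h2
      have hnorm : Tendsto (fun k => ‖x (c • stdBasis (g (ψ k)))‖) atTop (𝓝 ‖a‖) :=
        hlim.norm
      have hlower : (δ/2) * ε ≤ ‖a‖ := by
        refine le_of_tendsto_of_tendsto tendsto_const_nhds hnorm (Eventually.of_forall fun k => ?_)
        show (δ/2) * ε ≤ ‖x (c • stdBasis (g (ψ k)))‖
        have hxs : x (c • stdBasis (g (ψ k))) = c • x (stdBasis (g (ψ k))) :=
          _root_.map_smul x c _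
        rw [hxs, norm_smul, hc, Complex.norm_real, Real.norm_of_nonneg (by linarith)]
        exact mul_le_mul_of_nonneg_left (hgA (ψ k)) (by linarith)
      rw [ha, norm_zero] at hlower
      nlinarith
    -- now conclude φ x = 0
    rw [hφ_apply]
    have hbnd : ∀ ε : ℝ, 0 < ε → ‖∫ α, ⟪stdBasis α, x (stdBasis α)⟫ ∂ν‖ ≤ ε := by
      intro ε hε
      have hA : ν {α : X | ε ≤ ‖x (stdBasis α)‖} = 0 := hν_finite_null _ (hfin ε hε)
      have hae : ∀ᵐ α ∂ν, ‖⟪stdBasis α, x (stdBasis α)⟫‖ ≤ ε := by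
        rw [ae_iff]
        refine measure_mono_null (fun α hα => ?_) hA
        simp only [Set.mem_setOf_eq, not_le] at hα ⊢
        calc ε ≤ ‖⟪stdBasis α, x (stdBasis α)⟫‖ := le_of_lt hα
          _ ≤ ‖(stdBasis α : L2 X)‖ * ‖x (stdBasis α)‖ := norm_inner_le_norm _ _
          _ = ‖x (stdBasis α)‖ := by rw [norm_stdBasis, one_mul]
      calc ‖∫ α, ⟪stdBasis α, x (stdBasis α)⟫ ∂ν‖ ≤ ε * (ν Set.univ).toReal :=
            norm_integral_le_of_norm_le_const hae
        _ = ε := by simp [measure_univ]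
    by_contra hne
    have hpos : 0 < ‖∫ α, ⟪stdBasis α, x (stdBasis α)⟫ ∂ν‖ := by
      rw [norm_pos_iff]
      exact hne
    have := hbnd (‖∫ α, ⟪stdBasis α, x (stdBasis α)⟫ ∂ν‖ / 2) (by linarith)
    linarith
  -- countably additive
  · intro p hp horth
    have hf : ∀ (n : ℕ) (α : X), ⟪stdBasis α, p n (stdBasis α)⟫ =
        ((‖p n (stdBasis α)‖ ^ 2 : ℝ) : ℂ) := by
      intro n α
      rw [← inner_conj_symm, (hp n).inner_apply_self, Complex.conj_ofReal]
    have hsum_proj : ∀ α : X, Summable fun n => p n (stdBasis α) :=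
      fun α => summable_apply hp horth (stdBasis α)
    have hpt : ∀ α : X, ⟪stdBasis α, projCLM (⋃ n, Set.range ⇑(p n)) (stdBasis α)⟫ =
        ∑' n, ((‖p n (stdBasis α)‖ ^ 2 : ℝ) : ℂ) := by
      intro α
      rw [projCLM_apply_eq_tsum hp horth]
      have := ContinuousLinearMap.map_tsum (innerSL ℂ (stdBasis α)) (hsum_proj α)
      rw [innerSL_apply_apply] at this
      rw [this]
      refine tsum_congr fun n => ?_
      rw [innerSL_apply_apply]
      exact hf n α
    rw [hφ_apply]
    have hφn : ∀ n, φ (p n) = ∫ α, ((‖p n (stdBasis α)‖ ^ 2 : ℝ) : ℂ) ∂ν := by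
      intro n
      rw [hφ_apply]
      exact integral_congr_ae (ae_of_all _ fun α => hf n α)
    simp only [hpt, hφn]
    -- swap integral and tsum
    refine integral_tsum (fun n => (measurable_from_top).aestronglyMeasurable) ?_
    have hlin : ∑' n, ∫⁻ α, ‖((‖p n (stdBasis α)‖ ^ 2 : ℝ) : ℂ)‖ₑ ∂ν =
        ∫⁻ α, ∑' n, (‖((‖p n (stdBasis α)‖ ^ 2 : ℝ) : ℂ)‖ₑ : ℝ≥0∞) ∂ν :=
      (lintegral_tsum fun n => (measurable_from_top).aemeasurable).symm
    rw [hlin]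
    have hptwise : ∀ α : X, ∑' n, (‖((‖p n (stdBasis α)‖ ^ 2 : ℝ) : ℂ)‖ₑ : ℝ≥0∞) ≤ 1 := by
      intro α
      have hterm : ∀ n, (‖((‖p n (stdBasis α)‖ ^ 2 : ℝ) : ℂ)‖ₑ : ℝ≥0∞) =
          ENNReal.ofReal (‖p n (stdBasis α)‖ ^ 2) := by
        intro n
        rw [← ofReal_norm, Complex.norm_real,
          Real.norm_of_nonneg (sq_nonneg _)]
      simp only [hterm]
      rw [← ENNReal.ofReal_tsum_of_nonneg (fun n => sq_nonneg _)
        (summable_norm_sq hp horth (stdBasis α))]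
      calc ENNReal.ofReal (∑' n, ‖p n (stdBasis α)‖ ^ 2) ≤
            ENNReal.ofReal (‖(stdBasis α : L2 X)‖ ^ 2) :=
          ENNReal.ofReal_le_ofReal (tsum_norm_sq_le hp horth (stdBasis α))
        _ = 1 := by rw [norm_stdBasis]; norm_num
    have hle : ∫⁻ α, ∑' n, (‖((‖p n (stdBasis α)‖ ^ 2 : ℝ) : ℂ)‖ₑ : ℝ≥0∞) ∂ν ≤ 1 := by
      calc ∫⁻ α, ∑' n, (‖((‖p n (stdBasis α)‖ ^ 2 : ℝ) : ℂ)‖ₑ : ℝ≥0∞) ∂ν ≤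
            ∫⁻ _, 1 ∂ν := lintegral_mono fun α => hptwise α
        _ = 1 := by simp [measure_univ]
    exact ne_top_of_le_ne_top ENNReal.one_ne_top hle

section Reverse
open scoped ENNReal Classical
variable {X : Type}

local notation "⟪" x ", " y "⟫" => @inner ℂ _ _ x y

theorem reverse_direction (φ : (L2 X →L[ℂ] L2 X) →ₗ[ℂ] ℂ)
    (hstate : IsStateB φ) (hsing : SingularB φ) (hca : CountablyAdditiveB φ) :
    ∃ μ : Set X → ℝ, IsFAProb μ ∧ CountablyAdditiveMeas μ ∧ VanishesOnSingletons μ := by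
  have hpos : ∀ S : Set X, 0 ≤ φ (diagProj S) := by
    intro S
    refine hstate.2 _ fun v => ?_
    rw [(diagProj_isProj S).inner_apply_self v, Complex.zero_le_real]
    positivity
  have hreal : ∀ S : Set X, φ (diagProj S) = (((φ (diagProj S)).re : ℝ) : ℂ) := by
    intro S
    have h := (Complex.nonneg_iff).1 (hpos S)
    exact Complex.ext rfl (by simpa using h.2.symm)
  refine ⟨fun S => (φ (diagProj S)).re, ⟨?_, ?_, ?_⟩, ?_, ?_⟩
  -- nonneg
  · intro S
    exact ((Complex.nonneg_iff).1 (hpos S)).1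
  -- univ
  · show (φ (diagProj (Set.univ : Set X))).re = 1
    rw [diagProj_univ, hstate.1]
    rfl
  -- additive
  · intro S T h
    show (φ (diagProj (S ∪ T))).re = (φ (diagProj S)).re + (φ (diagProj T)).re
    rw [diagProj_union h, map_add, Complex.add_re]
  -- countably additive
  · intro S hd
    show (φ (diagProj (⋃ n, S n))).re = ∑' n, (φ (diagProj (S n))).re
    have horth : Pairwise fun m n => diagProj (S m) * diagProj (S n) = 0 := diagProj_orth hd
    have h := hca (fun n => diagProj (S n)) (fun n => diagProj_isProj (S n)) horth
    rw [projCLM_diagProj hd] at h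
    rw [h]
    by_cases hsum : Summable fun n => (φ (diagProj (S n))).re
    · have : (fun n => φ (diagProj (S n))) =
          fun n => (((φ (diagProj (S n))).re : ℝ) : ℂ) := funext fun n => hreal (S n)
      rw [this, ← Complex.ofReal_tsum]
      exact Complex.ofReal_re _
    · have hnot : ¬ Summable fun n => φ (diagProj (S n)) := by
        intro hc
        apply hsum
        have : (fun n => (((φ (diagProj (S n))).re : ℝ) : ℂ)) =
            fun n => φ (diagProj (S n)) := funext fun n => (hreal (S n)).symm
        have hc2 : Summable fun n => (((φ (diagProj (S n))).re : ℝ) : ℂ) := by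
          rw [this]; exact hc
        exact Complex.summable_ofReal.1 hc2
      rw [tsum_eq_zero_of_not_summable hnot, tsum_eq_zero_of_not_summable hsum]
      simp
  -- vanishes on singletons
  · intro x
    show (φ (diagProj ({x} : Set X))).re = 0
    rw [hsing (diagProj ({x} : Set X)) (isCompact_diagProj_singleton x)]
    simp

end Reverse

/-- Theorem 5 of "Quantum measurable cardinals": an uncountable cardinal `κ` is Ulam
real-valued measurable iff there is a singular countably additive state on `B(l²(κ))`. -/
theorem ulam_rvm_iff_singular_state_BH (κ : Cardinal.{0}) (hκ : Cardinal.aleph0 < κ)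
    (X : Type) (hX : Cardinal.mk X = κ) :
    (∃ μ : Set X → ℝ, IsFAProb μ ∧ CountablyAdditiveMeas μ ∧ VanishesOnSingletons μ) ↔
      (∃ φ : (L2 X →L[ℂ] L2 X) →ₗ[ℂ] ℂ,
        IsStateB φ ∧ SingularB φ ∧ CountablyAdditiveB φ) := by
  constructor
  · rintro ⟨μ, h1, h2, h3⟩
    exact forward_direction μ h1 h2 h3
  · rintro ⟨φ, h1, h2, h3⟩
    exact reverse_direction φ h1 h2 h3
end Forward
end
end

section
/- Let κ be an uncountable cardinal, μ a <κ-additive probability measure defined on all subsets of a set X, ι a type of cardinality strictly less than κ, and (f_α)_{α∈ι} a family of bounded functions X → [0,∞). Then ∫⁻ (fun x => ∑'_α f_α x) dμ = ∑'_α ∫⁻ f_α dμ. -/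
open MeasureTheory


lemma null_iUnion_of_lt_kappa (κ : Cardinal.{0})
    {X : Type} [m : MeasurableSpace X] (μ : Measure X)
    (hadd : ∀ (ι : Type) (S : ι → Set X), Cardinal.mk ι < κ →
      Pairwise (Function.onFun Disjoint S) → μ (⋃ i, S i) = ∑' i, μ (S i))
    (ι : Type) (hι : Cardinal.mk ι < κ) (N : ι → Set X) (hN : ∀ a, μ (N a) = 0) :
    μ (⋃ a, N a) = 0 := by
  classical
  set r : ι → ι → Prop := WellOrderingRel with hr
  have hwo : IsWellOrder ι r := WellOrderingRel.isWellOrder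
  set D : ι → Set X := fun a => N a \ ⋃ (b) (_ : r b a), N b with hD
  have hdisj : Pairwise (Function.onFun Disjoint D) := by
    intro a b hab
    rcases (haveI := hwo; trichotomous_of (r := r) a b) with h | h | h
    · exact Set.disjoint_left.2 fun x hxa hxb =>
        hxb.2 (Set.mem_biUnion h hxa.1)
    · exact absurd h hab
    · exact Set.disjoint_left.2 fun x hxa hxb =>
        hxa.2 (Set.mem_biUnion h hxb.1)
  have hUnion : ⋃ a, D a = ⋃ a, N a := by
    apply Set.Subset.antisymm
    · exact Set.iUnion_mono fun a => Set.diff_subset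
    · intro x hx
      have hne : {a | x ∈ N a}.Nonempty := by
        rcases Set.mem_iUnion.1 hx with ⟨a, ha⟩; exact ⟨a, ha⟩
      obtain ⟨a, ha, hmin⟩ := hwo.wf.has_min _ hne
      refine Set.mem_iUnion.2 ⟨a, ha, ?_⟩
      intro hxb
      rcases Set.mem_iUnion.1 hxb with ⟨b, hb⟩
      rcases Set.mem_iUnion.1 hb with ⟨hba, hxNb⟩
      exact hmin b hxNb hba
  have := hadd ι D hι hdisj
  rw [hUnion] at this
  rw [this]
  have : ∀ a, μ (D a) = 0 := fun a =>
    le_antisymm ((measure_mono Set.diff_subset).trans (hN a).le) (zero_le)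
  simp [this]


/-- Lemma 6 of "Quantum measurable cardinals": a transfinite monotone convergence theorem for
`<κ`-additive probability measures defined on all subsets of a set `X`. -/
theorem lintegral_tsum_of_lt_kappa (κ : Cardinal.{0}) (hκ : Cardinal.aleph0 < κ)
    {X : Type} [m : MeasurableSpace X] (hm : m = ⊤)
    (μ : Measure X) (hprob : IsProbabilityMeasure μ)
    (hadd : ∀ (ι : Type) (S : ι → Set X), Cardinal.mk ι < κ →
      Pairwise (Function.onFun Disjoint S) → μ (⋃ i, S i) = ∑' i, μ (S i))
    (ι : Type) (hι : Cardinal.mk ι < κ) (f : ι → X → ENNReal)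
    (hf : ∀ a : ι, ∃ C : ENNReal, C ≠ ⊤ ∧ ∀ x : X, f a x ≤ C) :
    ∫⁻ x, ∑' a, f a x ∂μ = ∑' a, ∫⁻ x, f a x ∂μ := by
  classical
  have hmeas : ∀ g : X → ENNReal, Measurable g := fun g => by
    rw [hm]; exact measurable_from_top
  -- easy direction
  have heasy : ∑' a, ∫⁻ x, f a x ∂μ ≤ ∫⁻ x, ∑' a, f a x ∂μ := by
    rw [ENNReal.tsum_eq_iSup_sum]
    refine iSup_le fun F => ?_
    rw [← lintegral_finset_sum F (fun a _ => hmeas _)]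
    exact lintegral_mono fun x => ENNReal.sum_le_tsum F
  refine le_antisymm ?_ heasy
  by_cases hR : ∑' a, ∫⁻ x, f a x ∂μ = ⊤
  · rw [hR]; exact le_top
  -- support is countable
  set S : Set ι := Function.support (fun a => ∫⁻ x, f a x ∂μ) with hS
  have hScount : S.Countable := Summable.countable_support_ennreal hR
  haveI : Countable ↥S := hScount.to_subtype
  -- the union of null supports
  have hnull : ∀ a : ↥Sᶜ, μ {x | f (a : ι) x ≠ 0} = 0 := by
    rintro ⟨a, ha⟩
    have h0 : ∫⁻ x, f a x ∂μ = 0 := by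
      by_contra h; exact ha h
    have := (lintegral_eq_zero_iff (hmeas (f a))).1 h0
    simpa [Filter.EventuallyEq, Filter.Eventually, MeasureTheory.ae_iff, MeasureTheory.mem_ae_iff, Set.compl_setOf] using this
  have hN : μ (⋃ a : ↥Sᶜ, {x | f (a : ι) x ≠ 0}) = 0 :=
    null_iUnion_of_lt_kappa κ μ hadd _ (lt_of_le_of_lt (Cardinal.mk_subtype_le _) hι) _ hnull
  -- a.e. the tsum restricts to S
  have hae : ∀ᵐ x ∂μ, ∑' a, f a x = ∑' a : ↥S, f (a : ι) x := by
    rw [MeasureTheory.ae_iff]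
    refine measure_mono_null ?_ hN
    intro x hx
    simp only [Set.mem_setOf_eq] at hx
    by_contra hxN
    apply hx
    have hz : ∀ a : ↥Sᶜ, f (a : ι) x = 0 := by
      intro a
      by_contra hfa
      exact hxN (Set.mem_iUnion.2 ⟨a, hfa⟩)
    have := Summable.tsum_add_tsum_compl (s := S) (f := fun a => f a x)
      ENNReal.summable ENNReal.summable
    rw [← this]
    simp [hz]
  calc ∫⁻ x, ∑' a, f a x ∂μ = ∫⁻ x, ∑' a : ↥S, f (a : ι) x ∂μ := lintegral_congr_ae hae
    _ = ∑' a : ↥S, ∫⁻ x, f (a : ι) x ∂μ :=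
        lintegral_tsum (fun a => (hmeas _).aemeasurable)
    _ ≤ ∑' a, ∫⁻ x, f a x ∂μ := by
        have := Summable.tsum_add_tsum_compl (s := S) (f := fun a => ∫⁻ x, f a x ∂μ)
          ENNReal.summable ENNReal.summable
        rw [← this]
        exact le_self_add
end

section
/- Assume the continuum hypothesis (2^ℵ₀ = ℵ₁). Then for every infinite cardinal κ: l^∞(κ) has a regular singular state if and only if κ is Ulam measurable, and B(l²(κ)) has a regular singular state if and only if κ is Ulam measurable. -/
open scoped ComplexOrder

noncomputable section

/-- A regular state on `l^∞(X)`: a countable union of null sets is null. -/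
def RegularLinf {X : Type} (φ : Linf X →ₗ[ℂ] ℂ) : Prop :=
  ∀ S : ℕ → Set X, (∀ n, φ (chi (S n)) = 0) → φ (chi (⋃ n, S n)) = 0

/-- A regular finitely additive measure: countable unions of null sets are null. -/
def RegularMeas {X : Type} (μ : Set X → ℝ) : Prop :=
  ∀ S : ℕ → Set X, (∀ n, μ (S n) = 0) → μ (⋃ n, S n) = 0

variable {H : Type} [NormedAddCommGroup H] [InnerProductSpace ℂ H] [CompleteSpace H]

/-- A regular state on `B(H)`: if `φ(qₙ) = 0` for a countable family of projections, then
`φ(⋁ qₙ) = 0`. -/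
def RegularB (φ : (H →L[ℂ] H) →ₗ[ℂ] ℂ) : Prop :=
  ∀ q : ℕ → H →L[ℂ] H, (∀ n, IsProjB (q n)) → (∀ n, φ (q n) = 0) →
    φ (projCLM (⋃ n, Set.range ⇑(q n))) = 0

namespace FAX

variable {X : Type} {μ : Set X → ℝ}

theorem fa_empty (h : IsFAProb μ) : μ ∅ = 0 := by
  have := h.2.2 ∅ ∅ (by simp)
  simp at this; linarith

theorem fa_add (h : IsFAProb μ) {S T : Set X} (hd : S ∩ T = ∅) :
    μ (S ∪ T) = μ S + μ T := h.2.2 S T hd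

theorem fa_mono (h : IsFAProb μ) {S T : Set X} (hst : S ⊆ T) : μ S ≤ μ T := by
  have hd : S ∩ (T \ S) = ∅ := by ext x; simp
  have hu : S ∪ (T \ S) = T := Set.union_diff_cancel hst
  have := h.2.2 S (T \ S) hd
  rw [hu] at this
  have := h.1 (T \ S)
  linarith

theorem fa_le_one (h : IsFAProb μ) (S : Set X) : μ S ≤ 1 := by
  have := fa_mono h (Set.subset_univ S); rw [h.2.1] at this; linarith

theorem fa_compl (h : IsFAProb μ) (S : Set X) : μ Sᶜ = 1 - μ S := by
  have hd : S ∩ Sᶜ = ∅ := by simp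
  have := h.2.2 S Sᶜ hd
  rw [Set.union_compl_self, h.2.1] at this; linarith

theorem fa_subadd (h : IsFAProb μ) (S T : Set X) : μ (S ∪ T) ≤ μ S + μ T := by
  have hd : S ∩ (T \ S) = ∅ := by ext x; simp
  have hu : S ∪ (T \ S) = S ∪ T := Set.union_diff_self
  have h2 := h.2.2 S (T \ S) hd
  rw [hu] at h2
  have := fa_mono h (Set.diff_subset : T \ S ⊆ T)
  linarith

theorem fa_null_mono (h : IsFAProb μ) {S T : Set X} (hst : S ⊆ T) (hT : μ T = 0) :
    μ S = 0 := le_antisymm (hT ▸ fa_mono h hst) (h.1 S)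

theorem fa_countable_null (h : IsFAProb μ) (hreg : RegularMeas μ)
    (hsing : VanishesOnSingletons μ) {S : Set X} (hS : S.Countable) : μ S = 0 := by
  rcases S.eq_empty_or_nonempty with rfl | hne
  · exact fa_empty h
  · obtain ⟨f, rfl⟩ := hS.exists_eq_range hne
    have : (Set.range f) = ⋃ n, {f n} := by ext x; simp [Set.mem_range, eq_comm]
    rw [this]
    exact hreg _ fun n => hsing (f n)

theorem fa_finset_sum (h : IsFAProb μ) {ι : Type*} (fam : ι → Set X) (G : Finset ι)
    (hd : ∀ i ∈ G, ∀ j ∈ G, i ≠ j → fam i ∩ fam j = ∅) :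
    μ (⋃ i ∈ G, fam i) = ∑ i ∈ G, μ (fam i) := by
  classical
  induction G using Finset.induction_on with
  | empty => simpa using fa_empty h
  | @insert a s ha ih =>
    have hd' : ∀ i ∈ s, ∀ j ∈ s, i ≠ j → fam i ∩ fam j = ∅ := fun i hi j hj =>
      hd i (Finset.mem_insert_of_mem hi) j (Finset.mem_insert_of_mem hj)
    have hsep : fam a ∩ (⋃ i ∈ s, fam i) = ∅ := by
      ext x
      simp only [Set.mem_inter_iff, Set.mem_iUnion, Set.mem_empty_iff_false, iff_false,
        not_and, not_exists]
      intro hxa i hi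
      intro hxi
      have := hd a (Finset.mem_insert_self a s) i (Finset.mem_insert_of_mem hi)
        (fun hai => ha (hai ▸ hi))
      have : x ∈ fam a ∩ fam i := ⟨hxa, hxi⟩
      rw [‹fam a ∩ fam i = ∅›] at this
      exact this
    rw [Finset.set_biUnion_insert, fa_add h hsep, ih hd', Finset.sum_insert ha]

/-- The Ulam-matrix contradiction: there is no finitely additive probability measure on an
uncountable set admitting a total order with countable initial segments, which vanishes on
singletons and has a σ-complete null ideal. -/
theorem ulam_contradiction {W : Type} (r : W → W → Prop)
    (htot : ∀ a b : W, a ≠ b → r a b ∨ r b a)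
    (hseg : ∀ b : W, Set.Countable {a | r a b})
    (hunc : ¬ Countable W)
    {ρ : Set W → ℝ} (hρ : IsFAProb ρ) (hreg : RegularMeas ρ)
    (hsing : VanishesOnSingletons ρ) : False := by
  classical
  -- injections of initial segments into ℕ
  have hι : ∀ b : W, ∃ f : {a | r a b} → ℕ, Function.Injective f := fun b =>
    Set.countable_iff_exists_injective.1 (hseg b)
  choose ι hι using hι
  set A : W → ℕ → Set W := fun α n => {β | ∃ h : r α β, ι β ⟨α, h⟩ = n} with hA
  -- each column is co-null
  have hcol : ∀ α : W, ∃ n : ℕ, ρ (A α n) ≠ 0 := by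
    intro α
    by_contra hall
    push_neg at hall
    have hnul : ρ (⋃ n, A α n) = 0 := hreg _ hall
    have hcompl : (⋃ n, A α n)ᶜ ⊆ {β | r β α} ∪ {α} := by
      intro β hβ
      simp only [Set.mem_compl_iff, Set.mem_iUnion, not_exists] at hβ
      by_cases hβα : β = α
      · exact Or.inr (by simp [hβα])
      · rcases htot α β (fun h => hβα h.symm) with h | h
        · exact absurd (show β ∈ A α (ι β ⟨α, h⟩) from ⟨h, rfl⟩) (hβ _)
        · exact Or.inl h
    have hcnull : ρ ((⋃ n, A α n)ᶜ) = 0 := by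
      refine fa_null_mono hρ hcompl ?_
      exact fa_countable_null hρ hreg hsing ((hseg α).union (Set.countable_singleton α))
    have := fa_compl hρ (⋃ n, A α n)
    rw [hnul, hcnull] at this
    norm_num at this
  choose nn hnn using hcol
  -- some fiber of nn is uncountable
  have hfib : ∃ k : ℕ, ¬ (Set.Countable {α : W | nn α = k}) := by
    by_contra hall
    push_neg at hall
    have : (Set.univ : Set W).Countable := by
      have : (Set.univ : Set W) = ⋃ k : ℕ, {α : W | nn α = k} := by
        ext α; simp
      rw [this]
      exact Set.countable_iUnion hall
    exact hunc (Set.countable_univ_iff.mp this)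
  obtain ⟨k, hk⟩ := hfib
  -- rows are pairwise disjoint
  have hdisj : ∀ α α' : W, α ≠ α' → A α k ∩ A α' k = ∅ := by
    intro α α' hne
    ext β
    simp only [Set.mem_inter_iff, Set.mem_empty_iff_false, iff_false, not_and]
    rintro ⟨h1, e1⟩ ⟨h2, e2⟩
    exact hne (congrArg Subtype.val (hι β (e1.trans e2.symm)))
  -- choose lower bounds
  have hm : ∀ α : W, nn α = k → ∃ m : ℕ, 1/(m+1 : ℝ) < ρ (A α k) := by
    intro α hα
    have hpos : 0 < ρ (A α k) := lt_of_le_of_ne (hρ.1 _) (Ne.symm (hα ▸ hnn α))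
    obtain ⟨m, hm⟩ := exists_nat_one_div_lt hpos
    exact ⟨m, hm⟩
  -- some class is infinite
  set F : ℕ → Set W := fun m => {α : W | ∃ h : nn α = k, 1/(m+1:ℝ) < ρ (A α k) ∧
      Nat.find (hm α h) = m} with hF
  have hFcover : {α : W | nn α = k} ⊆ ⋃ m, F m := by
    intro α hα
    exact Set.mem_iUnion.2 ⟨Nat.find (hm α hα), ⟨hα, Nat.find_spec (hm α hα), rfl⟩⟩
  have hFinf : ∃ m, (F m).Infinite := by
    by_contra hall
    push_neg at hall
    have : ({α : W | nn α = k}).Countable :=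
      Set.Countable.mono hFcover
        (Set.countable_iUnion fun m => (hall m).countable)
    exact hk this
  obtain ⟨m, hminf⟩ := hFinf
  obtain ⟨G, hGsub, hGcard⟩ := hminf.exists_subset_card_eq (m + 2)
  have hsum : ρ (⋃ α ∈ G, A α k) = ∑ α ∈ G, ρ (A α k) := by
    refine fa_finset_sum hρ _ G fun i _ j _ hij => hdisj i j hij
  have hsumlb : ((m:ℝ)+2) * (1/(m+1:ℝ)) ≤ ∑ α ∈ G, ρ (A α k) := by
    have hterm : ∀ α ∈ G, 1/(m+1:ℝ) ≤ ρ (A α k) := by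
      intro α hαG
      obtain ⟨h1, h2, h3⟩ := hGsub hαG
      exact le_of_lt h2
    have h2 := Finset.sum_le_sum hterm
    rw [Finset.sum_const, hGcard, nsmul_eq_mul] at h2
    push_cast at h2
    linarith
  have hle1 : ∑ α ∈ G, ρ (A α k) ≤ 1 := hsum ▸ fa_le_one hρ _
  have : (1:ℝ) < ((m:ℝ)+2) * (1/(m+1:ℝ)) := by
    rw [mul_one_div, lt_div_iff₀ (by positivity)]
    linarith
  linarith

end FAX

-- Part B : the m' (countably additive part) machinery and the forward core

namespace FAX

variable {X : Type} {μ : Set X → ℝ}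


theorem ciSup_add_mono {a b : ℕ → ℝ} (ha : Monotone a) (hb : Monotone b)
    (hA : BddAbove (Set.range a)) (hB : BddAbove (Set.range b)) :
    (⨆ n, (a n + b n)) = (⨆ n, a n) + ⨆ n, b n := by
  have ta : Filter.Tendsto a Filter.atTop (nhds (⨆ n, a n)) := tendsto_atTop_ciSup ha hA
  have tb : Filter.Tendsto b Filter.atTop (nhds (⨆ n, b n)) := tendsto_atTop_ciSup hb hB
  have tab : Filter.Tendsto (fun n => a n + b n) Filter.atTop
      (nhds ((⨆ n, a n) + ⨆ n, b n)) := ta.add tb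
  have hAB : BddAbove (Set.range fun n => a n + b n) := by
    obtain ⟨u, hu⟩ := hA
    obtain ⟨v, hv⟩ := hB
    refine ⟨u + v, ?_⟩
    rintro r ⟨n, rfl⟩
    exact add_le_add (hu ⟨n, rfl⟩) (hv ⟨n, rfl⟩)
  have tab' : Filter.Tendsto (fun n => a n + b n) Filter.atTop
      (nhds (⨆ n, (a n + b n))) := tendsto_atTop_ciSup (ha.add hb) hAB
  exact tendsto_nhds_unique tab' tab

/-- The set of values of increasing covers of `S`. -/
def covSet (μ : Set X → ℝ) (S : Set X) : Set ℝ :=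
  {r | ∃ c : ℕ → Set X, Monotone c ∧ (⋃ n, c n) = S ∧ r = ⨆ n, μ (c n)}

/-- The countably additive part of `μ`. -/
def mprime (μ : Set X → ℝ) (S : Set X) : ℝ := sInf (covSet μ S)

theorem bddAbove_range_mu (hμ : IsFAProb μ) (c : ℕ → Set X) :
    BddAbove (Set.range fun n => μ (c n)) :=
  ⟨1, by rintro r ⟨n, rfl⟩; exact fa_le_one hμ _⟩

theorem const_mem_covSet (S : Set X) : μ S ∈ covSet μ S :=
  ⟨fun _ => S, monotone_const, Set.iUnion_const S, (ciSup_const).symm⟩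

theorem covSet_nonneg (hμ : IsFAProb μ) {S : Set X} {r : ℝ} (hr : r ∈ covSet μ S) : 0 ≤ r := by
  obtain ⟨c, hc, hcu, rfl⟩ := hr
  exact le_trans (hμ.1 (c 0)) (le_ciSup (bddAbove_range_mu hμ c) 0)

theorem bddBelow_covSet (hμ : IsFAProb μ) (S : Set X) : BddBelow (covSet μ S) :=
  ⟨0, fun r hr => covSet_nonneg hμ hr⟩

theorem mprime_le (hμ : IsFAProb μ) (S : Set X) : mprime μ S ≤ μ S :=
  csInf_le (bddBelow_covSet hμ S) (const_mem_covSet S)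

theorem mprime_nonneg (hμ : IsFAProb μ) (S : Set X) : 0 ≤ mprime μ S :=
  le_csInf ⟨μ S, const_mem_covSet S⟩ fun r hr => covSet_nonneg hμ hr

theorem mprime_mono (hμ : IsFAProb μ) {S T : Set X} (hST : S ⊆ T) :
    mprime μ S ≤ mprime μ T := by
  refine le_csInf ⟨μ T, const_mem_covSet T⟩ ?_
  rintro r ⟨c, hc, hcu, rfl⟩
  have hmem : (⨆ n, μ (c n ∩ S)) ∈ covSet μ S := by
    refine ⟨fun n => c n ∩ S, fun i j hij => Set.inter_subset_inter_left S (hc hij), ?_, rfl⟩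
    rw [← Set.iUnion_inter, hcu, Set.inter_eq_right.2 hST]
  refine le_trans (csInf_le (bddBelow_covSet hμ S) hmem) ?_
  exact ciSup_mono (bddAbove_range_mu hμ c) fun n => fa_mono hμ Set.inter_subset_left

theorem mprime_add (hμ : IsFAProb μ) {S T : Set X} (hd : S ∩ T = ∅) :
    mprime μ (S ∪ T) = mprime μ S + mprime μ T := by
  have hge : mprime μ S + mprime μ T ≤ mprime μ (S ∪ T) := by
    refine le_csInf ⟨μ (S ∪ T), const_mem_covSet _⟩ ?_
    rintro r ⟨c, hc, hcu, rfl⟩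
    have h1 : mprime μ S ≤ ⨆ n, μ (c n ∩ S) := by
      refine csInf_le (bddBelow_covSet hμ S) ?_
      refine ⟨fun n => c n ∩ S, fun i j hij => Set.inter_subset_inter_left S (hc hij), ?_, rfl⟩
      rw [← Set.iUnion_inter, hcu, Set.union_inter_cancel_left]
    have h2 : mprime μ T ≤ ⨆ n, μ (c n ∩ T) := by
      refine csInf_le (bddBelow_covSet hμ T) ?_
      refine ⟨fun n => c n ∩ T, fun i j hij => Set.inter_subset_inter_left T (hc hij), ?_, rfl⟩
      rw [← Set.iUnion_inter, hcu, Set.union_inter_cancel_right]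
    have key : (⨆ n, μ (c n ∩ S)) + (⨆ n, μ (c n ∩ T)) = ⨆ n, μ (c n) := by
      rw [← ciSup_add_mono (fun i j hij => fa_mono hμ (Set.inter_subset_inter_left S (hc hij)))
        (fun i j hij => fa_mono hμ (Set.inter_subset_inter_left T (hc hij)))
        (bddAbove_range_mu hμ _) (bddAbove_range_mu hμ _)]
      refine iSup_congr fun n => ?_
      have hsub : c n ⊆ S ∪ T := hcu ▸ Set.subset_iUnion c n
      have hdd : (c n ∩ S) ∩ (c n ∩ T) = ∅ := by
        apply Set.eq_empty_of_subset_empty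
        intro x ⟨⟨_, hxS⟩, _, hxT⟩
        exact hd ▸ (⟨hxS, hxT⟩ : x ∈ S ∩ T)
      have huu : (c n ∩ S) ∪ (c n ∩ T) = c n := by
        rw [← Set.inter_union_distrib_left, Set.inter_eq_left.2 hsub]
      rw [← fa_add hμ hdd, huu]
    linarith [add_le_add h1 h2, key.le]
  have hle : mprime μ (S ∪ T) ≤ mprime μ S + mprime μ T := by
    refine le_of_forall_pos_le_add fun ε hε => ?_
    obtain ⟨ra, hra, hralt⟩ := exists_lt_of_csInf_lt ⟨μ S, const_mem_covSet S⟩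
      (show mprime μ S < mprime μ S + ε/2 by linarith)
    obtain ⟨rb, hrb, hrblt⟩ := exists_lt_of_csInf_lt ⟨μ T, const_mem_covSet T⟩
      (show mprime μ T < mprime μ T + ε/2 by linarith)
    obtain ⟨a, hamon, hau, rfl⟩ := hra
    obtain ⟨b, hbmon, hbu, rfl⟩ := hrb
    have hmem : (⨆ n, μ (a n ∪ b n)) ∈ covSet μ (S ∪ T) := by
      refine ⟨fun n => a n ∪ b n, fun i j hij => Set.union_subset_union (hamon hij) (hbmon hij),
        ?_, rfl⟩
      rw [Set.iUnion_union_distrib, hau, hbu]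
    have hval : (⨆ n, μ (a n ∪ b n)) ≤ (⨆ n, μ (a n)) + ⨆ n, μ (b n) := by
      refine ciSup_le fun n => le_trans (fa_subadd hμ _ _) ?_
      exact add_le_add (le_ciSup (bddAbove_range_mu hμ a) n) (le_ciSup (bddAbove_range_mu hμ b) n)
    calc mprime μ (S ∪ T) ≤ ⨆ n, μ (a n ∪ b n) := csInf_le (bddBelow_covSet hμ _) hmem
      _ ≤ (⨆ n, μ (a n)) + ⨆ n, μ (b n) := hval
      _ ≤ mprime μ S + mprime μ T + ε := by linarith
  linarith

theorem mprime_empty (hμ : IsFAProb μ) : mprime μ (∅ : Set X) = 0 :=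
  le_antisymm (le_trans (mprime_le hμ _) (fa_empty hμ).le) (mprime_nonneg hμ _)

theorem mprime_range_sum (hμ : IsFAProb μ) (S : ℕ → Set X)
    (hd : Pairwise (Function.onFun Disjoint S)) (K : ℕ) :
    mprime μ (⋃ k ∈ Finset.range K, S k) = ∑ k ∈ Finset.range K, mprime μ (S k) := by
  induction K with
  | zero => simpa using mprime_empty hμ
  | succ K ih =>
    have hdd : (⋃ k ∈ Finset.range K, S k) ∩ S K = ∅ := by
      apply Set.eq_empty_of_subset_empty
      rintro x ⟨hx1, hx2⟩
      simp only [Set.mem_iUnion] at hx1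
      obtain ⟨k, hk, hxk⟩ := hx1
      have : k ≠ K := fun h => by simp [h] at hk
      exact (hd this).le_bot ⟨hxk, hx2⟩
    have : (⋃ k ∈ Finset.range (K+1), S k) = (⋃ k ∈ Finset.range K, S k) ∪ S K := by
      rw [Finset.range_add_one, Finset.set_biUnion_insert, Set.union_comm]
    rw [this, mprime_add hμ hdd, ih, Finset.sum_range_succ]

theorem fa_biUnion_le (hμ : IsFAProb μ) (f : ℕ → Set X) (K : ℕ) :
    μ (⋃ k ∈ Finset.range K, f k) ≤ ∑ k ∈ Finset.range K, μ (f k) := by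
  induction K with
  | zero => simpa using (fa_empty hμ).le
  | succ K ih =>
    have : (⋃ k ∈ Finset.range (K+1), f k) = (⋃ k ∈ Finset.range K, f k) ∪ f K := by
      rw [Finset.range_add_one, Finset.set_biUnion_insert, Set.union_comm]
    rw [this, Finset.sum_range_succ]
    exact le_trans (fa_subadd hμ _ _) (by linarith)

theorem mprime_summable (hμ : IsFAProb μ) (S : ℕ → Set X)
    (hd : Pairwise (Function.onFun Disjoint S)) :
    Summable fun n => mprime μ (S n) := by
  apply summable_of_sum_range_le (c := mprime μ (⋃ n, S n)) (fun n => mprime_nonneg hμ _)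
  intro n
  rw [← mprime_range_sum hμ S hd n]
  exact mprime_mono hμ (Set.iUnion₂_subset fun k _ => Set.subset_iUnion S k)

theorem mprime_CA (hμ : IsFAProb μ) : CountablyAdditiveMeas (mprime μ) := by
  intro S hd
  have hsummable := mprime_summable hμ S hd
  refine le_antisymm ?_ ?_
  · -- ≤ : the diagonal argument
    refine le_of_forall_pos_le_add fun ε hε => ?_
    have hex : ∀ k : ℕ, ∃ c : ℕ → Set X, Monotone c ∧ (⋃ n, c n) = S k ∧
        (⨆ n, μ (c n)) < mprime μ (S k) + ε/2^(k+1) := by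
      intro k
      obtain ⟨r, hr, hrlt⟩ := exists_lt_of_csInf_lt ⟨μ (S k), const_mem_covSet _⟩
        (show mprime μ (S k) < mprime μ (S k) + ε/2^(k+1) by
          have : (0:ℝ) < ε/2^(k+1) := by positivity
          linarith)
      obtain ⟨c, h1, h2, rfl⟩ := hr
      exact ⟨c, h1, h2, hrlt⟩
    choose c hcmon hcu hclt using hex
    set D : ℕ → Set X := fun n => ⋃ k ∈ Finset.range (n+1), c k n with hD
    have hDmon : Monotone D := by
      intro i j hij
      intro x hx
      simp only [hD, Set.mem_iUnion, Finset.mem_range] at hx ⊢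
      obtain ⟨k, hk, hxk⟩ := hx
      exact ⟨k, lt_of_lt_of_le hk (by omega), hcmon k (by omega) hxk⟩
    have hDu : (⋃ n, D n) = ⋃ k, S k := by
      apply Set.Subset.antisymm
      · refine Set.iUnion_subset fun n => ?_
        refine Set.iUnion₂_subset fun k _ => ?_
        exact le_trans (le_trans (Set.subset_iUnion (c k) n) (hcu k).le)
          (Set.subset_iUnion S k)
      · refine Set.iUnion_subset fun k => ?_
        rw [← hcu k]
        refine Set.iUnion_subset fun m => ?_
        intro x hx
        refine Set.mem_iUnion.2 ⟨max k m, ?_⟩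
        simp only [hD, Set.mem_iUnion, Finset.mem_range]
        exact ⟨k, by omega, hcmon k (le_max_right k m) hx⟩
    have hmem : (⨆ n, μ (D n)) ∈ covSet μ (⋃ k, S k) := ⟨D, hDmon, hDu, rfl⟩
    have hval : (⨆ n, μ (D n)) ≤ (∑' k, mprime μ (S k)) + ε := by
      refine ciSup_le fun n => ?_
      have h1 : μ (D n) ≤ ∑ k ∈ Finset.range (n+1), μ (c k n) := fa_biUnion_le hμ _ _
      have h2 : ∑ k ∈ Finset.range (n+1), μ (c k n) ≤
          ∑ k ∈ Finset.range (n+1), (mprime μ (S k) + ε/2^(k+1)) := by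
        refine Finset.sum_le_sum fun k _ => ?_
        exact le_trans (le_ciSup (bddAbove_range_mu hμ (c k)) n) (hclt k).le
      have h3 : ∑ k ∈ Finset.range (n+1), (mprime μ (S k) + ε/2^(k+1)) =
          (∑ k ∈ Finset.range (n+1), mprime μ (S k)) +
          ∑ k ∈ Finset.range (n+1), ε/2^(k+1) := Finset.sum_add_distrib
      have h4 : ∑ k ∈ Finset.range (n+1), mprime μ (S k) ≤ ∑' k, mprime μ (S k) :=
        Summable.sum_le_tsum _ (fun k _ => mprime_nonneg hμ _) hsummable
      have h5 : ∑ k ∈ Finset.range (n+1), ε/2^(k+1) ≤ ε := by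
        have e1 : ∀ k ∈ Finset.range (n+1), ε/2^(k+1) = (ε/2) * (1/2:ℝ)^k := by
          intro k _
          rw [div_pow, one_pow, pow_succ]
          ring
        rw [Finset.sum_congr rfl e1, ← Finset.mul_sum]
        have h6 := sum_geometric_two_le (n+1)
        have h7 : (0:ℝ) ≤ ε/2 := by positivity
        nlinarith
      linarith
    exact le_trans (csInf_le (bddBelow_covSet hμ _) hmem) hval
  · -- ≥
    refine Summable.tsum_le_of_sum_range_le hsummable fun n => ?_
    rw [← mprime_range_sum hμ S hd n]
    exact mprime_mono hμ (Set.iUnion₂_subset fun k _ => Set.subset_iUnion S k)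

end FAX

-- Part C : CH order on ℕ → ℕ, pushforward Ulam argument, atom extraction

namespace FAX

theorem not_countable_baire (hCH : (2 : Cardinal.{0}) ^ Cardinal.aleph0 = Cardinal.aleph 1) :
    ¬ Countable (ℕ → ℕ) := by
  intro hc
  have h1 : Cardinal.mk (ℕ → ℕ) ≤ Cardinal.aleph0 := Cardinal.mk_le_aleph0_iff.2 hc
  have h2 : Cardinal.mk (ℕ → ℕ) = (2 : Cardinal.{0}) ^ Cardinal.aleph0 := by
    rw [Cardinal.mk_arrow]
    simp [Cardinal.power_self_eq]
  rw [h2, hCH] at h1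
  exact absurd (lt_of_lt_of_le Cardinal.aleph0_lt_aleph_one h1) (lt_irrefl _)

theorem exists_good_order (hCH : (2 : Cardinal.{0}) ^ Cardinal.aleph0 = Cardinal.aleph 1) :
    ∃ r : (ℕ → ℕ) → (ℕ → ℕ) → Prop,
      (∀ a b : ℕ → ℕ, a ≠ b → r a b ∨ r b a) ∧ (∀ b : ℕ → ℕ, Set.Countable {a | r a b}) := by
  have hmk : Cardinal.mk (ℕ → ℕ) = Cardinal.mk (Cardinal.aleph 1).ord.ToType := by
    rw [Cardinal.mk_toType, Cardinal.card_ord]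
    rw [Cardinal.mk_arrow]
    simp [Cardinal.power_self_eq]
    exact hCH
  obtain ⟨e⟩ := Cardinal.eq.mp hmk
  refine ⟨fun a b => e a < e b, ?_, ?_⟩
  · intro a b hab
    rcases Ne.lt_or_gt (fun h : e a = e b => hab (e.injective h)) with h | h
    · exact Or.inl h
    · exact Or.inr h
  · intro b
    have hinj : Function.Injective (fun a : {a | e a < e b} => (⟨e a.1, a.2⟩ : Set.Iio (e b))) := by
      rintro ⟨a1, h1⟩ ⟨a2, h2⟩ h
      have : e a1 = e a2 := congrArg Subtype.val h
      exact Subtype.ext (e.injective this)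
    have h1 : Cardinal.mk {a | e a < e b} ≤ Cardinal.mk (Set.Iio (e b)) :=
      Cardinal.mk_le_of_injective hinj
    have h2 : Cardinal.mk (Set.Iio (e b)) < Cardinal.aleph 1 := Cardinal.mk_Iio_ord_toType _
    exact (Cardinal.countable_iff_lt_aleph_one _).2 (lt_of_le_of_lt h1 h2)

theorem push_ulam (hCH : (2 : Cardinal.{0}) ^ Cardinal.aleph0 = Cardinal.aleph 1)
    {X : Type} {ρ : Set X → ℝ} (hρ : IsFAProb ρ) (hreg : RegularMeas ρ)
    (h : X → (ℕ → ℕ)) (hfib : ∀ g : ℕ → ℕ, ρ (h ⁻¹' {g}) = 0) : False := by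
  obtain ⟨r, htot, hseg⟩ := exists_good_order hCH
  refine ulam_contradiction r htot hseg (not_countable_baire hCH)
    (ρ := fun V => ρ (h ⁻¹' V)) ⟨fun V => hρ.1 _, ?_, ?_⟩ ?_ ?_
  · simp only [Set.preimage_univ]
    exact hρ.2.1
  · intro V W hVW
    show ρ (h ⁻¹' (V ∪ W)) = ρ (h ⁻¹' V) + ρ (h ⁻¹' W)
    rw [Set.preimage_union]
    refine hρ.2.2 _ _ ?_
    rw [← Set.preimage_inter, hVW, Set.preimage_empty]
  · intro S hS
    show ρ (h ⁻¹' (⋃ n, S n)) = 0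
    rw [Set.preimage_iUnion]
    exact hreg _ hS
  · exact fun g => hfib g

theorem null_of_forall_le_pow {t : ℝ} (h0 : 0 ≤ t) (h : ∀ k : ℕ, t ≤ (1/2:ℝ)^k) : t = 0 := by
  by_contra hne
  have hpos : 0 < t := lt_of_le_of_ne h0 (Ne.symm hne)
  obtain ⟨k, hk⟩ := exists_pow_lt_of_lt_one hpos (by norm_num : (1/2:ℝ) < 1)
  exact absurd (h k) (not_le.2 hk)

variable {X : Type} {μ ν : Set X → ℝ}

theorem mprime_univ_pos (hCH : (2 : Cardinal.{0}) ^ Cardinal.aleph0 = Cardinal.aleph 1)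
    (hμ : IsFAProb μ) (hreg : RegularMeas μ) (hsing : VanishesOnSingletons μ) :
    0 < mprime μ Set.univ := by
  classical
  rcases lt_or_ge 0 (mprime μ Set.univ) with h | h
  · exact h
  have hz : mprime μ Set.univ = 0 := le_antisymm h (mprime_nonneg hμ _)
  exfalso
  have hex : ∀ k : ℕ, ∃ c : ℕ → Set X, Monotone c ∧ (⋃ n, c n) = Set.univ ∧
      (⨆ n, μ (c n)) < (1/2:ℝ)^k := by
    intro k
    obtain ⟨r, hr, hrlt⟩ := exists_lt_of_csInf_lt ⟨μ Set.univ, const_mem_covSet _⟩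
      (show mprime μ Set.univ < (1/2:ℝ)^k by rw [hz]; positivity)
    obtain ⟨c, h1, h2, rfl⟩ := hr
    exact ⟨c, h1, h2, hrlt⟩
  choose c hcmon hcu hclt using hex
  have hex2 : ∀ (k : ℕ) (x : X), ∃ n, x ∈ c k n := by
    intro k x
    have : x ∈ ⋃ n, c k n := by rw [hcu k]; trivial
    exact Set.mem_iUnion.1 this
  refine push_ulam hCH hμ hreg (fun x k => Nat.find (hex2 k x)) fun g => ?_
  refine null_of_forall_le_pow (hμ.1 _) fun k => ?_
  have hsub : (fun x k => Nat.find (hex2 k x)) ⁻¹' {g} ⊆ c k (g k) := by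
    intro x hx
    have hxg : (fun k => Nat.find (hex2 k x)) = g := hx
    have := Nat.find_spec (hex2 k x)
    rwa [show Nat.find (hex2 k x) = g k from congrFun hxg k] at this
  refine le_trans (fa_mono hμ hsub) ?_
  exact le_of_lt (lt_of_le_of_lt (le_ciSup (bddAbove_range_mu hμ (c k)) (g k)) (hclt k))

theorem ca_regular (hν : IsFAProb ν) (hCA : CountablyAdditiveMeas ν) : RegularMeas ν := by
  intro S hS
  have h1 : ν (⋃ n, disjointed S n) = ∑' n, ν (disjointed S n) := hCA _ (disjoint_disjointed S)
  rw [iUnion_disjointed] at h1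
  have h0 : ∀ n, ν (disjointed S n) = 0 := fun n =>
    fa_null_mono hν (disjointed_subset S n) (hS n)
  rw [h1]
  simp [h0]

theorem countable_disjoint_pos (hν : IsFAProb ν) {𝒢 : Set (Set X)}
    (hpd : 𝒢.Pairwise fun A B => A ∩ B = ∅) (hpos : ∀ B ∈ 𝒢, 0 < ν B) :
    𝒢.Countable := by
  classical
  have hGm : ∀ m : ℕ, {B | B ∈ 𝒢 ∧ 1/(m+1:ℝ) < ν B}.Finite := by
    intro m
    by_contra hinf
    have hinf' : {B | B ∈ 𝒢 ∧ 1/(m+1:ℝ) < ν B}.Infinite := hinf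
    obtain ⟨G, hGsub, hGcard⟩ := hinf'.exists_subset_card_eq (m + 2)
    have hsum : ν (⋃ B ∈ G, (id B : Set X)) = ∑ B ∈ G, ν (id B) := by
      refine fa_finset_sum hν id G fun i hi j hj hij => ?_
      exact hpd (hGsub hi).1 (hGsub hj).1 hij
    have hterm : ∀ B ∈ G, 1/(m+1:ℝ) ≤ ν (id B) := fun B hB => (hGsub hB).2.le
    have h2 := Finset.sum_le_sum hterm
    rw [Finset.sum_const, hGcard, nsmul_eq_mul] at h2
    push_cast at h2
    have hle1 : ∑ B ∈ G, ν (id B) ≤ 1 := hsum ▸ fa_le_one hν _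
    have : (1:ℝ) < ((m:ℝ)+2) * (1/(m+1:ℝ)) := by
      rw [mul_one_div, lt_div_iff₀ (by positivity)]
      linarith
    linarith
  have hcover : 𝒢 ⊆ ⋃ m : ℕ, {B | B ∈ 𝒢 ∧ 1/(m+1:ℝ) < ν B} := by
    intro B hB
    obtain ⟨m, hm⟩ := exists_nat_one_div_lt (hpos B hB)
    exact Set.mem_iUnion.2 ⟨m, hB, hm⟩
  exact Set.Countable.mono hcover (Set.countable_iUnion fun m => (hGm m).countable)

theorem exists_small_pos (hν : IsFAProb ν)
    (hatom : ∀ B : Set X, 0 < ν B → ∃ C, C ⊆ B ∧ 0 < ν C ∧ ν C < ν B) :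
    ∀ B : Set X, 0 < ν B → ∀ ε : ℝ, 0 < ε → ∃ C, C ⊆ B ∧ 0 < ν C ∧ ν C ≤ ε := by
  intro B hB ε hε
  have key : ∀ k : ℕ, ∃ C, C ⊆ B ∧ 0 < ν C ∧ ν C ≤ ν B * (1/2)^k := by
    intro k
    induction k with
    | zero => exact ⟨B, subset_rfl, hB, by simp⟩
    | succ k ih =>
      obtain ⟨C, hCB, hCpos, hCle⟩ := ih
      obtain ⟨D, hDC, hDpos, hDlt⟩ := hatom C hCpos
      have hCD : ν (C \ D) = ν C - ν D := by
        have hd : D ∩ (C \ D) = ∅ := by ext x; simp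
        have hu : D ∪ (C \ D) = C := Set.union_diff_cancel hDC
        have := fa_add hν hd
        rw [hu] at this
        linarith
      by_cases hhalf : ν D ≤ ν C / 2
      · exact ⟨D, hDC.trans hCB, hDpos, by rw [pow_succ]; nlinarith⟩
      · refine ⟨C \ D, (Set.diff_subset).trans hCB, ?_, ?_⟩
        · rw [hCD]; linarith
        · rw [hCD, pow_succ]; nlinarith
  obtain ⟨k, hk⟩ := exists_pow_lt_of_lt_one (div_pos hε hB) (by norm_num : (1/2:ℝ) < 1)
  obtain ⟨C, h1, h2, h3⟩ := key k
  refine ⟨C, h1, h2, le_trans h3 ?_⟩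
  rw [lt_div_iff₀ hB] at hk
  nlinarith

theorem small_partition (hν : IsFAProb ν)
    (hatom : ∀ B : Set X, 0 < ν B → ∃ C, C ⊆ B ∧ 0 < ν C ∧ ν C < ν B)
    {A : Set X} (hA : 0 < ν A) {ε : ℝ} (hε : 0 < ε) :
    ∃ P : ℕ → Set X, (A ⊆ ⋃ n, P n) ∧ ∀ n, ν (P n) ≤ ε := by
  classical
  set 𝒜 : Set (Set (Set X)) :=
    {F | (∀ B ∈ F, B ⊆ A ∧ 0 < ν B ∧ ν B ≤ ε) ∧ F.Pairwise fun B C => B ∩ C = ∅} with h𝒜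
  obtain ⟨F, hFmem, hFmax⟩ : ∃ F ∈ 𝒜, ∀ G ∈ 𝒜, F ⊆ G → G = F := by
    have := zorn_subset_nonempty 𝒜 ?_ ∅ ⟨by simp, Set.pairwise_empty _⟩
    · obtain ⟨m, hm1, hm2⟩ := this
      exact ⟨m, hm2.1, fun G hG hFG => le_antisymm (hm2.2 hG hFG) hFG⟩
    · intro c hc hchain hcne
      refine ⟨⋃₀ c, ⟨?_, ?_⟩, fun s hs => Set.subset_sUnion_of_mem hs⟩
      · rintro B ⟨F, hF, hBF⟩
        exact (hc hF).1 B hBF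
      · intro B hB C hC hBC
        obtain ⟨F1, hF1, hBF1⟩ := hB
        obtain ⟨F2, hF2, hCF2⟩ := hC
        rcases hchain.total hF1 hF2 with h | h
        · exact (hc hF2).2 (h hBF1) hCF2 hBC
        · exact (hc hF1).2 hBF1 (h hCF2) hBC
  obtain ⟨hFprop, hFpd⟩ := hFmem
  have hR : ν (A \ ⋃₀ F) = 0 := by
    by_contra hne
    have hRpos : 0 < ν (A \ ⋃₀ F) := lt_of_le_of_ne (hν.1 _) (Ne.symm hne)
    obtain ⟨C, hCR, hCpos, hCle⟩ := exists_small_pos hν hatom _ hRpos ε hε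
    have hCnotF : C ∉ F := by
      intro hCF
      have hCsub : C ⊆ ⋃₀ F := Set.subset_sUnion_of_mem hCF
      have : C ⊆ (∅ : Set X) := fun x hx => absurd (hCR hx).2 (by simp [hCsub hx])
      have : ν C = 0 := fa_null_mono hν this (fa_empty hν)
      linarith
    have hins : insert C F ∈ 𝒜 := by
      constructor
      · rintro B hB
        rcases Set.mem_insert_iff.1 hB with rfl | hBF
        · exact ⟨hCR.trans Set.diff_subset, hCpos, hCle⟩
        · exact hFprop B hBF
      · intro B hB D hD hBD
        rcases Set.mem_insert_iff.1 hB with rfl | hBF <;>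
          rcases Set.mem_insert_iff.1 hD with rfl | hDF
        · exact absurd rfl hBD
        · apply Set.eq_empty_of_subset_empty
          rintro x ⟨hx1, hx2⟩
          exact (hCR hx1).2 (Set.mem_sUnion.2 ⟨_, hDF, hx2⟩)
        · apply Set.eq_empty_of_subset_empty
          rintro x ⟨hx1, hx2⟩
          exact (hCR hx2).2 (Set.mem_sUnion.2 ⟨_, hBF, hx1⟩)
        · exact hFpd hBF hDF hBD
    have heq := hFmax _ hins (Set.subset_insert C F)
    exact hCnotF (heq ▸ Set.mem_insert C F)
  have hFcnt : F.Countable := countable_disjoint_pos hν hFpd fun B hB => (hFprop B hB).2.1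
  rcases F.eq_empty_or_nonempty with rfl | hFne
  · exfalso
    simp only [Set.sUnion_empty, Set.diff_empty] at hR
    linarith
  obtain ⟨f, hf⟩ := hFcnt.exists_eq_range hFne
  refine ⟨fun n => if n = 0 then f 0 ∪ (A \ ⋃₀ F) else f n, ?_, ?_⟩
  · intro x hx
    by_cases hxF : x ∈ ⋃₀ F
    · obtain ⟨B, hBF, hxB⟩ := hxF
      rw [hf] at hBF
      obtain ⟨n, rfl⟩ := hBF
      rcases Nat.eq_zero_or_pos n with rfl | hn
      · exact Set.mem_iUnion.2 ⟨0, by simp [hxB]⟩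
      · exact Set.mem_iUnion.2 ⟨n, by simp [Nat.pos_iff_ne_zero.1 hn, hxB]⟩
    · exact Set.mem_iUnion.2 ⟨0, by simp [Set.mem_union, hx, hxF]⟩
  · intro n
    have hfn : ∀ m : ℕ, ν (f m) ≤ ε := by
      intro m
      have : f m ∈ F := by rw [hf]; exact ⟨m, rfl⟩
      exact (hFprop _ this).2.2
    rcases Nat.eq_zero_or_pos n with rfl | hn
    · simp only [if_pos rfl]
      refine le_trans (fa_subadd hν _ _) ?_
      rw [hR]
      linarith [hfn 0]
    · simp only [if_neg (Nat.pos_iff_ne_zero.1 hn)]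
      exact hfn n

theorem atom_exists (hCH : (2 : Cardinal.{0}) ^ Cardinal.aleph0 = Cardinal.aleph 1)
    (hν : IsFAProb ν) (hCA : CountablyAdditiveMeas ν) :
    ∃ A : Set X, 0 < ν A ∧ ∀ C : Set X, C ⊆ A → ν C = 0 ∨ ν C = ν A := by
  classical
  by_contra hno
  push_neg at hno
  have hatom : ∀ B : Set X, 0 < ν B → ∃ C, C ⊆ B ∧ 0 < ν C ∧ ν C < ν B := by
    intro B hB
    obtain ⟨C, hCB, h1, h2⟩ := hno B hB
    exact ⟨C, hCB, lt_of_le_of_ne (hν.1 C) (Ne.symm h1),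
      lt_of_le_of_ne (fa_mono hν hCB) h2⟩
  have huniv : 0 < ν Set.univ := by rw [hν.2.1]; norm_num
  have hex : ∀ k : ℕ, ∃ P : ℕ → Set X, (Set.univ ⊆ ⋃ n, P n) ∧ ∀ n, ν (P n) ≤ (1/2:ℝ)^k :=
    fun k => small_partition hν hatom huniv (by positivity)
  choose P hPcov hPle using hex
  have hex2 : ∀ (k : ℕ) (x : X), ∃ n, x ∈ P k n := fun k x => Set.mem_iUnion.1 (hPcov k trivial)
  refine push_ulam hCH hν (ca_regular hν hCA) (fun x k => Nat.find (hex2 k x)) fun g => ?_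
  refine null_of_forall_le_pow (hν.1 _) fun k => ?_
  have hsub : (fun x k => Nat.find (hex2 k x)) ⁻¹' {g} ⊆ P k (g k) := by
    intro x hx
    have hxg : (fun k => Nat.find (hex2 k x)) = g := hx
    have := Nat.find_spec (hex2 k x)
    rwa [show Nat.find (hex2 k x) = g k from congrFun hxg k] at this
  exact le_trans (fa_mono hν hsub) (hPle k (g k))

/-- The main forward core: under CH, a finitely additive probability measure vanishing on
singletons with σ-complete null ideal yields a two-valued countably additive one. -/
theorem forward_core {X : Type} (hCH : (2 : Cardinal.{0}) ^ Cardinal.aleph0 = Cardinal.aleph 1)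
    {μ : Set X → ℝ} (hμ : IsFAProb μ) (hreg : RegularMeas μ) (hsing : VanishesOnSingletons μ) :
    ∃ m : Set X → ℝ, IsFAProb m ∧ (∀ S : Set X, m S = 0 ∨ m S = 1) ∧
      CountablyAdditiveMeas m ∧ VanishesOnSingletons m := by
  have hpos : 0 < mprime μ Set.univ := mprime_univ_pos hCH hμ hreg hsing
  set ν : Set X → ℝ := fun S => mprime μ S / mprime μ Set.univ with hνdef
  have hν : IsFAProb ν := by
    refine ⟨fun S => div_nonneg (mprime_nonneg hμ S) hpos.le, div_self hpos.ne', fun S T hd => ?_⟩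
    simp only [hνdef]
    rw [mprime_add hμ hd, add_div]
  have hνCA : CountablyAdditiveMeas ν := by
    intro S hd
    simp only [hνdef]
    rw [mprime_CA hμ S hd, tsum_div_const]
  have hνsing : VanishesOnSingletons ν := by
    intro x
    have : mprime μ {x} = 0 :=
      le_antisymm (le_trans (mprime_le hμ _) (hsing x).le) (mprime_nonneg hμ _)
    simp [hνdef, this]
  obtain ⟨A, hApos, hAatom⟩ := atom_exists hCH hν hνCA
  refine ⟨fun S => ν (S ∩ A) / ν A, ⟨?_, ?_, ?_⟩, ?_, ?_, ?_⟩
  · exact fun S => div_nonneg (hν.1 _) hApos.le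
  · show ν (Set.univ ∩ A) / ν A = 1
    rw [Set.univ_inter]
    exact div_self hApos.ne'
  · intro S T hd
    show ν ((S ∪ T) ∩ A) / ν A = ν (S ∩ A) / ν A + ν (T ∩ A) / ν A
    have h1 : (S ∪ T) ∩ A = (S ∩ A) ∪ (T ∩ A) := Set.union_inter_distrib_right S T A
    have h2 : (S ∩ A) ∩ (T ∩ A) = ∅ := by
      apply Set.eq_empty_of_subset_empty
      rintro x ⟨⟨hxS, hxA⟩, hxT, -⟩
      exact hd ▸ (⟨hxS, hxT⟩ : x ∈ S ∩ T)
    rw [h1, hν.2.2 _ _ h2, add_div]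
  · intro S
    rcases hAatom (S ∩ A) Set.inter_subset_right with h | h
    · refine Or.inl ?_
      show ν (S ∩ A) / ν A = 0
      rw [h, zero_div]
    · refine Or.inr ?_
      show ν (S ∩ A) / ν A = 1
      rw [h, div_self hApos.ne']
  · intro S hd
    show ν ((⋃ n, S n) ∩ A) / ν A = ∑' n, ν (S n ∩ A) / ν A
    have h1 : (⋃ n, S n) ∩ A = ⋃ n, (S n ∩ A) := by rw [Set.iUnion_inter]
    have h2 : Pairwise (Function.onFun Disjoint fun n => S n ∩ A) := by
      intro i j hij
      exact Set.disjoint_of_subset Set.inter_subset_left Set.inter_subset_left (hd hij)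
    rw [h1, hνCA _ h2, tsum_div_const, tsum_div_const, tsum_div_const]
  · intro x
    show ν ({x} ∩ A) / ν A = 0
    refine div_eq_zero_iff.2 (Or.inl ?_)
    exact fa_null_mono hν Set.inter_subset_left (hνsing x)

end FAX

-- Part D : translation between states on `l∞` and finitely additive measures

namespace FAX

variable {X : Type}

theorem chi_apply (S : Set X) (x : X) : (chi S : X → ℂ) x = S.indicator 1 x := rfl

theorem chi_nonneg (S : Set X) (x : X) : (0:ℂ) ≤ (chi S : X → ℂ) x := by
  by_cases h : x ∈ S <;> simp [chi_apply, Set.indicator_apply, h]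

theorem chi_union {S T : Set X} (hd : S ∩ T = ∅) : chi (S ∪ T) = chi S + chi T := by
  apply lp.ext
  rw [lp.coeFn_add]
  funext x
  simp only [chi_apply, Pi.add_apply]
  by_cases hxS : x ∈ S <;> by_cases hxT : x ∈ T
  · exact absurd (show x ∈ (∅ : Set X) from hd ▸ (⟨hxS, hxT⟩ : x ∈ S ∩ T)) (Set.notMem_empty x)
  · simp [Set.indicator_apply, hxS, hxT]
  · simp [Set.indicator_apply, hxS, hxT]
  · simp [Set.indicator_apply, hxS, hxT]

theorem chi_univ : chi (Set.univ : Set X) = 1 := by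
  apply lp.ext
  rw [lp.infty_coeFn_one]
  funext x
  simp [chi_apply]

theorem state_chi_real {φ : Linf X →ₗ[ℂ] ℂ} (hst : IsStateLinf φ) (S : Set X) :
    φ (chi S) = (((φ (chi S)).re : ℝ) : ℂ) ∧ 0 ≤ (φ (chi S)).re := by
  have h := hst.2 (chi S) (chi_nonneg S)
  rw [Complex.nonneg_iff] at h
  exact ⟨Complex.ext rfl (by simp [← h.2]), h.1⟩

theorem measure_of_state {φ : Linf X →ₗ[ℂ] ℂ} (hst : IsStateLinf φ) (hsing : SingularLinf φ)
    (hreg : RegularLinf φ) :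
    IsFAProb (fun S : Set X => (φ (chi S)).re) ∧
      RegularMeas (fun S : Set X => (φ (chi S)).re) ∧
      VanishesOnSingletons (fun S : Set X => (φ (chi S)).re) := by
  have hchi0 : ∀ S : Set X, (φ (chi S)).re = 0 → φ (chi S) = 0 := fun S h => by
    rw [(state_chi_real hst S).1, h]
    simp
  refine ⟨⟨fun S => (state_chi_real hst S).2, ?_, ?_⟩, ?_, ?_⟩
  · show (φ (chi (Set.univ : Set X))).re = 1
    rw [chi_univ, hst.1, Complex.one_re]
  · intro S T hd
    show (φ (chi (S ∪ T))).re = (φ (chi S)).re + (φ (chi T)).re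
    rw [chi_union hd, map_add, Complex.add_re]
  · intro S hS
    show (φ (chi (⋃ n, S n))).re = 0
    rw [hreg S fun n => hchi0 _ (hS n)]
    simp
  · intro x
    show (φ (chi ({x} : Set X))).re = 0
    have hfin : (Function.support fun y => (chi ({x} : Set X) : X → ℂ) y).Finite := by
      refine Set.Finite.subset (Set.finite_singleton x) fun y hy => ?_
      by_contra hne
      exact hy (by simp [chi_apply, Set.indicator_apply, hne])
    rw [hsing _ hfin]
    simp

theorem mk_gt_of_meas (hX : Cardinal.aleph0 ≤ Cardinal.mk X) {μ : Set X → ℝ}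
    (hμ : IsFAProb μ) (hreg : RegularMeas μ) (hsing : VanishesOnSingletons μ) :
    Cardinal.aleph0 < Cardinal.mk X := by
  rcases lt_or_ge Cardinal.aleph0 (Cardinal.mk X) with h | h
  · exact h
  exfalso
  have hcnt : Countable X := Cardinal.mk_le_aleph0_iff.1 h
  have : μ Set.univ = 0 :=
    fa_countable_null hμ hreg hsing (Set.countable_univ)
  rw [hμ.2.1] at this
  norm_num at this

/-- The ultrafilter of full-measure sets of a two-valued finitely additive measure. -/
def mkUF (μ : Set X → ℝ) (hμ : IsFAProb μ) (h2 : TwoValuedMeas μ) : Ultrafilter X :=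
  Ultrafilter.ofComplNotMemIff
    { sets := {S : Set X | μ S = 1}
      univ_sets := hμ.2.1
      sets_of_superset := by
        intro S T hS hST
        simp only [Set.mem_setOf_eq] at *
        have h1 := fa_mono hμ hST
        have h2' := fa_le_one hμ T
        linarith
      inter_sets := by
        intro S T hS hT
        simp only [Set.mem_setOf_eq] at *
        have hc1 : μ Sᶜ = 0 := by rw [fa_compl hμ]; linarith
        have hc2 : μ Tᶜ = 0 := by rw [fa_compl hμ]; linarith
        have hcc : μ ((S ∩ T)ᶜ) ≤ 0 := by
          rw [Set.compl_inter]
          have := fa_subadd hμ Sᶜ Tᶜ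
          linarith
        have h0 := hμ.1 ((S ∩ T)ᶜ)
        have := fa_compl hμ (S ∩ T)
        linarith }
    (by
      intro S
      show μ Sᶜ ≠ 1 ↔ μ S = 1
      rw [fa_compl hμ]
      rcases h2 S with h | h <;> rw [h] <;> norm_num)

theorem mem_mkUF {μ : Set X → ℝ} (hμ : IsFAProb μ) (h2 : TwoValuedMeas μ) (S : Set X) :
    S ∈ mkUF μ hμ h2 ↔ μ S = 1 := Iff.rfl

theorem compl_mem_mkUF {μ : Set X → ℝ} (hμ : IsFAProb μ) (h2 : TwoValuedMeas μ) (S : Set X)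
    (hS : μ S = 0) : Sᶜ ∈ mkUF μ hμ h2 := by
  rw [mem_mkUF, fa_compl hμ, hS]
  norm_num

/-- Limit along an ultrafilter. -/
def ULim (U : Ultrafilter X) (f : X → ℂ) : ℂ :=
  Classical.epsilon fun c => Filter.Tendsto f U (nhds c)

theorem ULim_spec (U : Ultrafilter X) {f : X → ℂ} (hb : ∃ C : ℝ, ∀ x, ‖f x‖ ≤ C) :
    Filter.Tendsto f (U : Filter X) (nhds (ULim U f)) := by
  have hex : ∃ c : ℂ, Filter.Tendsto f U (nhds c) := by
    obtain ⟨C, hC⟩ := hb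
    have hcpt : IsCompact (Metric.closedBall (0:ℂ) C) := isCompact_closedBall _ _
    have hmem : (Ultrafilter.map f U : Filter ℂ) ≤ Filter.principal (Metric.closedBall 0 C) := by
      rw [Ultrafilter.coe_map, Filter.le_principal_iff, Filter.mem_map]
      refine Filter.mem_of_superset Filter.univ_mem fun x _ => ?_
      simp only [Set.mem_preimage, Metric.mem_closedBall, dist_zero_right]
      exact hC x
    obtain ⟨c, _, hle⟩ := hcpt.ultrafilter_le_nhds (Ultrafilter.map f U) hmem
    rw [Ultrafilter.coe_map] at hle
    exact ⟨c, hle⟩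
  exact Classical.epsilon_spec hex

theorem ULim_eq (U : Ultrafilter X) {f : X → ℂ} (hb : ∃ C : ℝ, ∀ x, ‖f x‖ ≤ C) {c : ℂ}
    (h : Filter.Tendsto f (U : Filter X) (nhds c)) : ULim U f = c :=
  tendsto_nhds_unique (ULim_spec U hb) h

theorem linf_bdd (f : Linf X) : ∃ C : ℝ, ∀ x, ‖(f : X → ℂ) x‖ ≤ C :=
  ⟨‖f‖, fun x => lp.norm_apply_le_norm ENNReal.top_ne_zero f x⟩

theorem isClosed_nonneg : IsClosed {z : ℂ | 0 ≤ z} := by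
  have : {z : ℂ | 0 ≤ z} = Complex.re ⁻¹' (Set.Ici 0) ∩ Complex.im ⁻¹' {0} := by
    ext z
    simp only [Set.mem_setOf_eq, Complex.nonneg_iff, Set.mem_inter_iff, Set.mem_preimage,
      Set.mem_Ici, Set.mem_singleton_iff]
    constructor
    · rintro ⟨h1, h2⟩; exact ⟨h1, h2.symm⟩
    · rintro ⟨h1, h2⟩; exact ⟨h1, h2.symm⟩
  rw [this]
  exact (isClosed_Ici.preimage Complex.continuous_re).inter
    (isClosed_singleton.preimage Complex.continuous_im)

/-- The state on `l∞` given by limit along an ultrafilter. -/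
def stateU (U : Ultrafilter X) : Linf X →ₗ[ℂ] ℂ where
  toFun f := ULim U (fun x => f x)
  map_add' f g := by
    have hf := ULim_spec U (linf_bdd f)
    have hg := ULim_spec U (linf_bdd g)
    refine ULim_eq U (linf_bdd (f + g)) ?_
    rw [lp.coeFn_add]
    exact hf.add hg
  map_smul' c f := by
    have hf := ULim_spec U (linf_bdd f)
    simp only [RingHom.id_apply, smul_eq_mul]
    refine ULim_eq U (linf_bdd (c • f)) ?_
    rw [lp.coeFn_smul]
    exact hf.const_mul c

theorem stateU_apply (U : Ultrafilter X) (f : Linf X) :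
    stateU U f = ULim U (fun x => f x) := rfl

theorem stateU_isState (U : Ultrafilter X) : IsStateLinf (stateU (X := X) U) := by
  constructor
  · rw [stateU_apply]
    refine ULim_eq U (linf_bdd 1) ?_
    rw [lp.infty_coeFn_one]
    exact tendsto_const_nhds
  · intro f hf
    rw [stateU_apply]
    exact isClosed_nonneg.mem_of_tendsto (ULim_spec U (linf_bdd f))
      (Filter.Eventually.of_forall fun x => hf x)

theorem ULim_of_eventually_zero (U : Ultrafilter X) {f : X → ℂ}
    (hb : ∃ C : ℝ, ∀ x, ‖f x‖ ≤ C) (h : {x | f x = 0} ∈ U) : ULim U f = 0 := by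
  refine ULim_eq U hb ?_
  have he : f =ᶠ[(U : Filter X)] (fun _ => 0) := by
    filter_upwards [h] with x hx using hx
  exact Filter.Tendsto.congr' he.symm tendsto_const_nhds

theorem ULim_of_eventually_one (U : Ultrafilter X) {f : X → ℂ}
    (hb : ∃ C : ℝ, ∀ x, ‖f x‖ ≤ C) (h : {x | f x = 1} ∈ U) : ULim U f = 1 := by
  refine ULim_eq U hb ?_
  have he : f =ᶠ[(U : Filter X)] (fun _ => 1) := by
    filter_upwards [h] with x hx using hx
  exact Filter.Tendsto.congr' he.symm tendsto_const_nhds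

theorem stateU_chi_one {μ : Set X → ℝ} (hμ : IsFAProb μ) (h2 : TwoValuedMeas μ)
    {S : Set X} (hS : μ S = 1) : stateU (mkUF μ hμ h2) (chi S) = 1 := by
  rw [stateU_apply]
  refine ULim_of_eventually_one _ (linf_bdd _) ?_
  refine Filter.mem_of_superset ((mem_mkUF hμ h2 S).2 hS) fun x hx => ?_
  simp [chi_apply, Set.indicator_apply, hx]

theorem stateU_chi_zero {μ : Set X → ℝ} (hμ : IsFAProb μ) (h2 : TwoValuedMeas μ)
    {S : Set X} (hS : μ S = 0) : stateU (mkUF μ hμ h2) (chi S) = 0 := by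
  rw [stateU_apply]
  refine ULim_of_eventually_zero _ (linf_bdd _) ?_
  refine Filter.mem_of_superset (compl_mem_mkUF hμ h2 S hS) fun x hx => ?_
  simp only [Set.mem_compl_iff] at hx
  simp [chi_apply, Set.indicator_apply, hx]

theorem exists_state_of_meas {μ : Set X → ℝ} (hμ : IsFAProb μ) (h2 : TwoValuedMeas μ)
    (hCA : CountablyAdditiveMeas μ) (hsing : VanishesOnSingletons μ) :
    ∃ φ : Linf X →ₗ[ℂ] ℂ, IsStateLinf φ ∧ SingularLinf φ ∧ RegularLinf φ := by
  have hregμ : RegularMeas μ := ca_regular hμ hCA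
  refine ⟨stateU (mkUF μ hμ h2), stateU_isState _, ?_, ?_⟩
  · intro f hfin
    rw [stateU_apply]
    refine ULim_of_eventually_zero _ (linf_bdd f) ?_
    have hnull : μ (Function.support fun x => f x) = 0 :=
      fa_countable_null hμ hregμ hsing hfin.countable
    refine Filter.mem_of_superset (compl_mem_mkUF hμ h2 _ hnull) fun x hx => ?_
    simp only [Set.mem_compl_iff, Function.mem_support, not_not] at hx
    exact hx
  · intro S hS
    have hSnull : ∀ n, μ (S n) = 0 := by
      intro n
      rcases h2 (S n) with h | h
      · exact h
      · exact absurd (hS n) (by rw [stateU_chi_one hμ h2 h]; exact one_ne_zero)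
    exact stateU_chi_zero hμ h2 (hregμ S hSnull)

end FAX

-- Part E : states on B(l²(X)) from measures

namespace FAX

variable {X : Type}

theorem stdBasis_eq (α : X) :
    stdBasis α = (letI := Classical.decEq X; lp.single 2 α (1:ℂ)) := rfl

theorem norm_stdBasis (α : X) : ‖(stdBasis α : L2 X)‖ = 1 := by
  letI := Classical.decEq X
  have h := lp.norm_single (E := fun _ : X => ℂ) (p := 2)
    (by norm_num : (0:ENNReal) < 2) α (1:ℂ)
  rw [stdBasis_eq]
  rw [h]
  exact norm_one

theorem inner_stdBasis_left (α : X) (f : L2 X) : (inner ℂ (stdBasis α) f : ℂ) = f α := by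
  letI := Classical.decEq X
  rw [stdBasis_eq, lp.inner_single_left]
  simp [RCLike.inner_apply]

theorem inner_stdBasis_right (α : X) (f : L2 X) :
    (inner ℂ f (stdBasis α) : ℂ) = (starRingEnd ℂ) (f α) := by
  letI := Classical.decEq X
  rw [stdBasis_eq, lp.inner_single_right]
  simp [RCLike.inner_apply]

theorem inner_stdBasis_self (α : X) : (inner ℂ (stdBasis α) (stdBasis α) : ℂ) = 1 := by
  rw [inner_self_eq_norm_sq_to_K, norm_stdBasis]
  norm_num

/-- diagonal entries of an operator -/
def dg (T : L2 X →L[ℂ] L2 X) : X → ℂ := fun α => inner ℂ (stdBasis α) (T (stdBasis α))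

theorem dg_bdd (T : L2 X →L[ℂ] L2 X) : ∃ C : ℝ, ∀ α, ‖dg T α‖ ≤ C := by
  refine ⟨‖T‖, fun α => ?_⟩
  refine le_trans (norm_inner_le_norm _ _) ?_
  rw [norm_stdBasis, one_mul]
  calc ‖T (stdBasis α)‖ ≤ ‖T‖ * ‖stdBasis α‖ := T.le_opNorm _
    _ = ‖T‖ := by rw [norm_stdBasis, mul_one]

theorem dg_proj (q : L2 X →L[ℂ] L2 X) (hq : IsProjB q) (α : X) :
    dg q α = ((‖q (stdBasis α)‖^2 : ℝ) : ℂ) := by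
  have hadj : ContinuousLinearMap.adjoint q = q := by
    rw [← ContinuousLinearMap.star_eq_adjoint]
    exact hq.1
  unfold dg
  have h3 := ContinuousLinearMap.adjoint_inner_right q (stdBasis α) (q (stdBasis α))
  rw [hadj] at h3
  conv_lhs => rw [← hq.2]
  rw [ContinuousLinearMap.mul_apply, h3, inner_self_eq_norm_sq_to_K]
  norm_cast

/-- The state on B(l²) given by an ultrafilter limit of diagonal entries. -/
def stateB (U : Ultrafilter X) : (L2 X →L[ℂ] L2 X) →ₗ[ℂ] ℂ where
  toFun T := ULim U (dg T)
  map_add' T S := by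
    have hT := ULim_spec U (dg_bdd T)
    have hS := ULim_spec U (dg_bdd S)
    refine ULim_eq U (dg_bdd (T + S)) ?_
    have he : dg (T + S) = fun α => dg T α + dg S α := by
      funext α
      unfold dg
      rw [ContinuousLinearMap.add_apply, inner_add_right]
    rw [he]
    exact hT.add hS
  map_smul' ch T := by
    have hT := ULim_spec U (dg_bdd T)
    simp only [RingHom.id_apply, smul_eq_mul]
    refine ULim_eq U (dg_bdd (ch • T)) ?_
    have he : dg (ch • T) = fun α => ch * dg T α := by
      funext α
      unfold dg
      rw [ContinuousLinearMap.smul_apply, inner_smul_right]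
    rw [he]
    exact hT.const_mul ch

theorem stateB_apply (U : Ultrafilter X) (T : L2 X →L[ℂ] L2 X) :
    stateB U T = ULim U (dg T) := rfl

theorem stateB_isState (U : Ultrafilter X) : IsStateB (stateB (X := X) U) := by
  constructor
  · rw [stateB_apply]
    refine ULim_eq U (dg_bdd 1) ?_
    have he : dg (1 : L2 X →L[ℂ] L2 X) = fun _ => (1:ℂ) := by
      funext α
      unfold dg
      rw [ContinuousLinearMap.one_apply, inner_stdBasis_self]
    rw [he]
    exact tendsto_const_nhds
  · intro T hT
    rw [stateB_apply]
    refine isClosed_nonneg.mem_of_tendsto (ULim_spec U (dg_bdd T))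
      (Filter.Eventually.of_forall fun α => ?_)
    have h := hT (stdBasis α)
    rw [Complex.nonneg_iff] at h
    have hconj : (inner ℂ (stdBasis α) (T (stdBasis α)) : ℂ) =
        (starRingEnd ℂ) (inner ℂ (T (stdBasis α)) (stdBasis α)) := (inner_conj_symm _ _).symm
    show (0:ℂ) ≤ dg T α
    unfold dg
    rw [hconj, Complex.nonneg_iff]
    constructor
    · simp only [Complex.conj_re]
      exact h.1
    · simp only [Complex.conj_im]
      rw [← h.2]
      norm_num

set_option synthInstance.maxHeartbeats 1000000 in
set_option maxHeartbeats 1000000 in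
theorem finite_large_of_compact {T : L2 X →L[ℂ] L2 X} (hT : IsCompactOperator ⇑T)
    {ε : ℝ} (hε : 0 < ε) : {α : X | ε ≤ ‖T (stdBasis α)‖}.Finite := by
  classical
  by_contra hinf
  have hinf' : {α : X | ε ≤ ‖T (stdBasis α)‖}.Infinite := hinf
  set emb := hinf'.natEmbedding with hemb
  set a : ℕ → X := fun k => (emb k : X) with ha
  have hamem : ∀ k, ε ≤ ‖T (stdBasis (a k))‖ := fun k => (emb k).2
  have hainj : Function.Injective a := fun i j h => emb.injective (Subtype.ext h)
  obtain ⟨K, hK, hKmem⟩ := hT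
  obtain ⟨δ, hδpos, hball⟩ := Metric.mem_nhds_iff.1 hKmem
  set c : ℝ := δ/2 with hc
  have hcpos : 0 < c := by positivity
  set v : ℕ → L2 X := fun k => (c:ℂ) • stdBasis (a k) with hv
  have hvK : ∀ k, T (v k) ∈ K := by
    intro k
    apply hball
    show v k ∈ Metric.ball (0 : L2 X) δ
    rw [Metric.mem_ball, dist_zero_right, hv]
    simp only [norm_smul, Complex.norm_real]
    rw [norm_stdBasis, mul_one]
    rw [Real.norm_eq_abs, abs_of_pos hcpos]
    rw [hc]
    linarith
  obtain ⟨y, hyK, θ, hθ, hconv⟩ := hK.tendsto_subseq hvK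
  have hnorm : ∀ k, c * ε ≤ ‖T (v k)‖ := by
    intro k
    rw [hv]
    simp only [map_smul, norm_smul, Complex.norm_real, Real.norm_eq_abs, abs_of_pos hcpos]
    exact mul_le_mul_of_nonneg_left (hamem k) hcpos.le
  have hy_norm : c * ε ≤ ‖y‖ :=
    ge_of_tendsto hconv.norm (Filter.Eventually.of_forall fun k => hnorm (θ k))
  have hzero : ∀ g : L2 X, (inner ℂ g y : ℂ) = 0 := by
    intro g
    set F : L2 X := ContinuousLinearMap.adjoint T g with hF
    have h2 : ∀ k, (inner ℂ g (T (v k)) : ℂ) = (c:ℂ) * (starRingEnd ℂ) (F (a k)) := by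
      intro k
      rw [← ContinuousLinearMap.adjoint_inner_left T]
      rw [hv]
      show (inner ℂ F ((c:ℂ) • stdBasis (a k)) : ℂ) = _
      rw [inner_smul_right, inner_stdBasis_right]
    have hsum : Summable fun x : X => ‖(F : X → ℂ) x‖ ^ ((2:ENNReal).toReal) :=
      (lp.memℓp F).summable (by norm_num)
    have hsum2 : Summable fun x : X => ‖(F : X → ℂ) x‖ ^ (2:ℕ) := by
      have he : ∀ x : X, ‖(F : X → ℂ) x‖ ^ ((2:ENNReal).toReal) = ‖(F : X → ℂ) x‖ ^ (2:ℕ) := by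
        intro x
        rw [show ((2:ENNReal).toReal) = ((2:ℕ):ℝ) by norm_num, Real.rpow_natCast]
      exact (summable_congr he).1 hsum
    have h3 : Filter.Tendsto (fun x : X => ‖(F : X → ℂ) x‖ ^ (2:ℕ)) Filter.cofinite (nhds 0) :=
      hsum2.tendsto_cofinite_zero
    have h4 : Filter.Tendsto (fun k => ‖(F : X → ℂ) (a k)‖ ^ (2:ℕ)) Filter.atTop (nhds 0) := by
      refine h3.comp ?_
      rw [← Nat.cofinite_eq_atTop]
      exact hainj.tendsto_cofinite
    have h5 : Filter.Tendsto (fun k => ‖(F : X → ℂ) (a k)‖) Filter.atTop (nhds 0) := by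
      have hs := (Real.continuous_sqrt.tendsto 0).comp h4
      simp only [Real.sqrt_zero] at hs
      refine hs.congr fun k => ?_
      show Real.sqrt (‖(F : X → ℂ) (a k)‖ ^ (2:ℕ)) = ‖(F : X → ℂ) (a k)‖
      rw [Real.sqrt_sq (norm_nonneg _)]
    have h6 : Filter.Tendsto (fun k => (F : X → ℂ) (a k)) Filter.atTop (nhds 0) :=
      tendsto_zero_iff_norm_tendsto_zero.2 h5
    have h7 : Filter.Tendsto (fun k => (inner ℂ g (T (v k)) : ℂ)) Filter.atTop (nhds 0) := by
      have := ((h6.star).const_mul ((c:ℝ):ℂ)).congr fun k => (h2 k).symm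
      simpa using this
    have h8 : Filter.Tendsto (fun k => (inner ℂ g (T (v (θ k))) : ℂ)) Filter.atTop (nhds 0) :=
      h7.comp hθ.tendsto_atTop
    have h9 : Filter.Tendsto (fun k => (inner ℂ g (T (v (θ k))) : ℂ)) Filter.atTop
        (nhds (inner ℂ g y)) := tendsto_const_nhds.inner hconv
    exact tendsto_nhds_unique h9 h8
  have hy0 : y = 0 := by
    have := hzero y
    rwa [inner_self_eq_zero] at this
  rw [hy0, norm_zero] at hy_norm
  nlinarith

theorem inner_closure_span_zero {H : Type} [NormedAddCommGroup H] [InnerProductSpace ℂ H]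
    {v : H} {s : Set H} (h : ∀ w ∈ s, (inner ℂ v w : ℂ) = 0) :
    ∀ w ∈ (Submodule.span ℂ s).topologicalClosure, (inner ℂ v w : ℂ) = 0 := by
  intro w hw
  have hker : (Submodule.span ℂ s).topologicalClosure ≤ (innerSL ℂ v).ker := by
    refine Submodule.topologicalClosure_minimal _ ?_ (ContinuousLinearMap.isClosed_ker _)
    rw [Submodule.span_le]
    intro u hu
    simp only [SetLike.mem_coe, LinearMap.mem_ker]
    rw [ContinuousLinearMap.coe_coe, innerSL_apply_apply]
    exact h u hu
  have hmem := hker hw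
  simpa only [LinearMap.mem_ker, ContinuousLinearMap.coe_coe, innerSL_apply_apply] using hmem

theorem projCLM_eq_of {H : Type} [NormedAddCommGroup H] [InnerProductSpace ℂ H]
    [CompleteSpace H] (s : Set H) (v u : H)
    (hu : u ∈ (Submodule.span ℂ s).topologicalClosure)
    (horth : ∀ w ∈ (Submodule.span ℂ s).topologicalClosure, (inner ℂ (v - u) w : ℂ) = 0) :
    projCLM s v = u := by
  haveI : CompleteSpace ((Submodule.span ℂ s).topologicalClosure) :=
    (Submodule.isClosed_topologicalClosure _).completeSpace_coe
  show ((Submodule.orthogonalProjection (Submodule.span ℂ s).topologicalClosure v : H)) = u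
  exact Submodule.eq_starProjection_of_mem_of_inner_eq_zero hu horth

theorem small_of_forall_lt {t : ℝ} (h0 : 0 ≤ t) (h : ∀ k : ℕ, t < 1/(k+1:ℝ)) : t = 0 := by
  by_contra hne
  have hpos : 0 < t := lt_of_le_of_ne h0 (Ne.symm hne)
  obtain ⟨k, hk⟩ := exists_nat_one_div_lt hpos
  exact absurd (h k) (not_lt.2 hk.le)

theorem exists_stateB_of_meas {μ : Set X → ℝ} (hμ : IsFAProb μ) (h2 : TwoValuedMeas μ)
    (hCA : CountablyAdditiveMeas μ) (hsing : VanishesOnSingletons μ) :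
    ∃ φ : (L2 X →L[ℂ] L2 X) →ₗ[ℂ] ℂ, IsStateB φ ∧ SingularB φ ∧ RegularB φ := by
  have hregμ : RegularMeas μ := ca_regular hμ hCA
  set U := mkUF μ hμ h2 with hU
  refine ⟨stateB U, stateB_isState U, ?_, ?_⟩
  · -- singular
    intro T hTcpt
    rw [stateB_apply]
    refine ULim_eq U (dg_bdd T) ?_
    rw [Metric.tendsto_nhds]
    intro ε hε
    have hfin := finite_large_of_compact hTcpt hε
    have hnull : μ {α : X | ε ≤ ‖T (stdBasis α)‖} = 0 :=
      fa_countable_null hμ hregμ hsing hfin.countable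
    have hmem := compl_mem_mkUF hμ h2 _ hnull
    refine Filter.mem_of_superset hmem fun α hα => ?_
    simp only [Set.mem_compl_iff, Set.mem_setOf_eq, not_le] at hα
    show dist (dg T α) 0 < ε
    rw [dist_zero_right]
    refine lt_of_le_of_lt ?_ hα
    refine le_trans (norm_inner_le_norm _ _) ?_
    rw [norm_stdBasis, one_mul]
  · -- regular
    intro q hqproj hqnull
    have htend : ∀ n, Filter.Tendsto (dg (q n)) (U : Filter X) (nhds 0) := by
      intro n
      have := ULim_spec U (dg_bdd (q n))
      rwa [show ULim U (dg (q n)) = 0 from hqnull n] at this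
    set Sset : ℕ → ℕ → Set X := fun n k => {α | 1/(k+1:ℝ) ≤ ‖q n (stdBasis α)‖^2} with hSset
    have hSnull : ∀ n k, μ (Sset n k) = 0 := by
      intro n k
      rcases h2 (Sset n k) with h | h
      · exact h
      exfalso
      have hmemU : Sset n k ∈ U := (mem_mkUF hμ h2 _).2 h
      have hcl : IsClosed {z : ℂ | 1/(k+1:ℝ) ≤ z.re} :=
        isClosed_Ici.preimage Complex.continuous_re
      have h0mem : (0:ℂ) ∈ {z : ℂ | 1/(k+1:ℝ) ≤ z.re} := by
        refine hcl.mem_of_tendsto (htend n) ?_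
        refine Filter.mem_of_superset hmemU fun α hα => ?_
        show 1/(k+1:ℝ) ≤ (dg (q n) α).re
        rw [dg_proj (q n) (hqproj n) α, Complex.ofReal_re]
        exact hα

      simp only [Set.mem_setOf_eq, Complex.zero_re] at h0mem
      have : (0:ℝ) < 1/(k+1:ℝ) := by positivity
      linarith
    set Nset : Set X := ⋃ m : ℕ, Sset (Nat.unpair m).1 (Nat.unpair m).2 with hNset
    have hNnull : μ Nset = 0 := hregμ _ fun m => hSnull _ _
    have hqzero : ∀ α ∉ Nset, ∀ n, q n (stdBasis α) = 0 := by
      intro α hα n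
      have hall : ∀ k : ℕ, ‖q n (stdBasis α)‖^2 < 1/(k+1:ℝ) := by
        intro k
        by_contra hcon
        push_neg at hcon
        exact hα (Set.mem_iUnion.2 ⟨Nat.pair n k, by
          rw [Nat.unpair_pair]
          exact hcon⟩)
      have := small_of_forall_lt (by positivity) hall
      have hn : ‖q n (stdBasis α)‖ = 0 := by nlinarith [norm_nonneg (q n (stdBasis α))]
      exact norm_eq_zero.1 hn
    have hproj0 : ∀ α ∉ Nset, projCLM (⋃ n, Set.range ⇑(q n)) (stdBasis α) = 0 := by
      intro α hα
      refine projCLM_eq_of _ _ _ (Submodule.zero_mem _) ?_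
      rw [sub_zero]
      refine inner_closure_span_zero ?_
      rintro w ⟨_, ⟨n, rfl⟩, u, rfl⟩
      have hadj : ContinuousLinearMap.adjoint (q n) = q n := by
        rw [← ContinuousLinearMap.star_eq_adjoint]
        exact (hqproj n).1
      rw [← hadj, ContinuousLinearMap.adjoint_inner_right, hqzero α hα n, inner_zero_left]
    show ULim U (dg (projCLM (⋃ n, Set.range ⇑(q n)))) = 0
    refine ULim_of_eventually_zero U (dg_bdd _) ?_
    refine Filter.mem_of_superset (compl_mem_mkUF hμ h2 _ hNnull) fun α hα => ?_
    show dg (projCLM (⋃ n, Set.range ⇑(q n))) α = 0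
    unfold dg
    rw [hproj0 α hα, inner_zero_right]

end FAX

-- Part F : multiplication operators, transfer from B(l²) to l∞

namespace FAX

variable {X : Type}

theorem mul_memℓp (f : Linf X) (g : L2 X) : Memℓp (fun x => f x * g x) 2 := by
  apply memℓp_gen
  have hg : Summable fun x : X => ‖g x‖ ^ ((2:ENNReal).toReal) :=
    (lp.memℓp g).summable (by norm_num)
  refine Summable.of_nonneg_of_le (fun x => ?_) (fun x => ?_)
    (hg.mul_left (‖f‖ ^ ((2:ENNReal).toReal)))
  · exact Real.rpow_nonneg (norm_nonneg _) _
  · rw [norm_mul, ← Real.mul_rpow (norm_nonneg _) (norm_nonneg _)]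
    refine Real.rpow_le_rpow (by positivity) ?_ (by norm_num)
    exact mul_le_mul_of_nonneg_right (lp.norm_apply_le_norm ENNReal.top_ne_zero f x)
      (norm_nonneg _)

theorem mulCLM_bound (f : Linf X) (g : L2 X) :
    ‖(⟨fun x => f x * g x, mul_memℓp f g⟩ : L2 X)‖ ≤ ‖f‖ * ‖g‖ := by
  have hpos : 0 < ((2:ENNReal).toReal) := by norm_num
  set h : L2 X := ⟨fun x => f x * g x, mul_memℓp f g⟩ with hh
  have h1 := lp.norm_rpow_eq_tsum hpos h
  have h2 := lp.norm_rpow_eq_tsum hpos g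
  have hg : Summable fun x : X => ‖g x‖ ^ ((2:ENNReal).toReal) :=
    (lp.memℓp g).summable hpos
  have hfg : Summable fun x : X => ‖(h : X → ℂ) x‖ ^ ((2:ENNReal).toReal) :=
    (lp.memℓp h).summable hpos
  have hptwise : ∀ x : X, ‖(h : X → ℂ) x‖ ^ ((2:ENNReal).toReal) ≤
      ‖f‖ ^ ((2:ENNReal).toReal) * ‖g x‖ ^ ((2:ENNReal).toReal) := by
    intro x
    show ‖f x * g x‖ ^ ((2:ENNReal).toReal) ≤ _
    rw [← Real.mul_rpow (norm_nonneg _) (norm_nonneg _), norm_mul]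
    refine Real.rpow_le_rpow (by positivity) ?_ (by norm_num)
    exact mul_le_mul_of_nonneg_right (lp.norm_apply_le_norm ENNReal.top_ne_zero f x)
      (norm_nonneg _)
  have key : ‖h‖ ^ ((2:ENNReal).toReal) ≤ (‖f‖ * ‖g‖) ^ ((2:ENNReal).toReal) := by
    rw [h1, Real.mul_rpow (norm_nonneg f) (norm_nonneg g)]
    calc ∑' x, ‖(h : X → ℂ) x‖ ^ ((2:ENNReal).toReal)
        ≤ ∑' x, (‖f‖ ^ ((2:ENNReal).toReal) * ‖g x‖ ^ ((2:ENNReal).toReal)) :=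
          Summable.tsum_le_tsum hptwise hfg (hg.mul_left _)
      _ = ‖f‖ ^ ((2:ENNReal).toReal) * ∑' x, ‖g x‖ ^ ((2:ENNReal).toReal) := tsum_mul_left
      _ = ‖f‖ ^ ((2:ENNReal).toReal) * ‖g‖ ^ ((2:ENNReal).toReal) := by rw [← h2]
  rw [show ((2:ENNReal).toReal) = ((2:ℕ):ℝ) by norm_num, Real.rpow_natCast,
    Real.rpow_natCast] at key
  exact le_of_pow_le_pow_left₀ (by norm_num) (by positivity) key

/-- Multiplication operator on `l²` by a bounded function. -/
def mulCLM (f : Linf X) : L2 X →L[ℂ] L2 X :=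
  LinearMap.mkContinuous
    { toFun := fun g => (⟨fun x => f x * g x, mul_memℓp f g⟩ : L2 X)
      map_add' := by
        intro g h
        apply lp.ext
        simp only [lp.coeFn_add]
        funext x
        show f x * (g + h) x = f x * g x + f x * h x
        rw [lp.coeFn_add, Pi.add_apply, mul_add]
      map_smul' := by
        intro c g
        apply lp.ext
        simp only [lp.coeFn_smul]
        funext x
        show f x * (c • g) x = (c • fun y => f y * g y) x
        rw [lp.coeFn_smul, Pi.smul_apply, Pi.smul_apply, smul_eq_mul, smul_eq_mul]
        ring }
    ‖f‖ (fun g => mulCLM_bound f g)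

theorem mulCLM_apply (f : Linf X) (g : L2 X) (x : X) :
    ((mulCLM f g : L2 X) : X → ℂ) x = f x * g x := rfl

theorem mulCLM_one : mulCLM (1 : Linf X) = 1 := by
  refine ContinuousLinearMap.ext fun g => ?_
  rw [ContinuousLinearMap.one_apply]
  apply lp.ext
  funext x
  show (1 : Linf X) x * g x = g x
  rw [lp.infty_coeFn_one]
  exact one_mul _

theorem mulCLM_add (f g : Linf X) : mulCLM (f + g) = mulCLM f + mulCLM g := by
  refine ContinuousLinearMap.ext fun h => ?_
  apply lp.ext
  rw [ContinuousLinearMap.add_apply, lp.coeFn_add]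
  funext x
  show (f + g) x * h x = (mulCLM f h : X → ℂ) x + (mulCLM g h : X → ℂ) x
  rw [mulCLM_apply, mulCLM_apply, lp.coeFn_add, Pi.add_apply, add_mul]

theorem mulCLM_smul (c : ℂ) (f : Linf X) : mulCLM (c • f) = c • mulCLM f := by
  refine ContinuousLinearMap.ext fun h => ?_
  apply lp.ext
  rw [ContinuousLinearMap.smul_apply, lp.coeFn_smul]
  funext x
  show (c • f) x * h x = (c • fun y => (mulCLM f h : X → ℂ) y) x
  rw [Pi.smul_apply, smul_eq_mul, lp.coeFn_smul, Pi.smul_apply, smul_eq_mul, mulCLM_apply]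
  ring

theorem tsum_nonneg_complex {ι : Type} {c : ι → ℂ} (hs : Summable c) (h : ∀ i, 0 ≤ c i) :
    0 ≤ ∑' i, c i := by
  obtain ⟨s, hsum⟩ := hs
  have hre : HasSum (fun i => (c i).re) s.re := Complex.hasSum_re hsum
  have him : HasSum (fun i => (c i).im) s.im := Complex.hasSum_im hsum
  have him0 : (fun i => (c i).im) = fun _ => (0:ℝ) :=
    funext fun i => ((Complex.nonneg_iff.1 (h i)).2).symm
  have hs_im : s.im = 0 := (hasSum_zero.unique (him0 ▸ him)).symm
  have hre0 : 0 ≤ s.re :=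
    hasSum_le (fun i => (Complex.nonneg_iff.1 (h i)).1) hasSum_zero hre
  rw [hsum.tsum_eq, Complex.nonneg_iff]
  exact ⟨hre0, hs_im.symm⟩

theorem mulCLM_pos {f : Linf X} (hf : ∀ x, 0 ≤ f x) (g : L2 X) :
    0 ≤ (inner ℂ ((mulCLM f) g) g : ℂ) := by
  rw [lp.inner_eq_tsum]
  refine tsum_nonneg_complex (lp.summable_inner _ _) fun x => ?_
  show (0:ℂ) ≤ inner ℂ ((mulCLM f g : X → ℂ) x) ((g : X → ℂ) x)
  rw [RCLike.inner_apply, mulCLM_apply]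
  obtain ⟨h1, h2⟩ := Complex.nonneg_iff.1 (hf x)
  have hconj : (starRingEnd ℂ) (f x) = f x := Complex.conj_eq_iff_im.2 h2.symm
  rw [map_mul, hconj, mul_left_comm]
  exact mul_nonneg (hf x) (mul_star_self_nonneg _)

theorem finite_rank_compact {T : L2 X →L[ℂ] L2 X} (V : Submodule ℂ (L2 X))
    [FiniteDimensional ℂ V] (hrange : ∀ g, T g ∈ V) : IsCompactOperator ⇑T := by
  haveI : ProperSpace V := FiniteDimensional.proper ℂ V
  refine ⟨Subtype.val '' (Metric.closedBall (0 : V) ‖T‖), ?_, ?_⟩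
  · exact (isCompact_closedBall _ _).image continuous_subtype_val
  · refine Filter.mem_of_superset (Metric.ball_mem_nhds 0 one_pos) ?_
    intro g hg
    rw [Metric.mem_ball, dist_zero_right] at hg
    refine ⟨⟨T g, hrange g⟩, ?_, rfl⟩
    rw [Metric.mem_closedBall, dist_zero_right]
    show ‖T g‖ ≤ ‖T‖
    calc ‖T g‖ ≤ ‖T‖ * ‖g‖ := T.le_opNorm g
      _ ≤ ‖T‖ * 1 := mul_le_mul_of_nonneg_left hg.le (norm_nonneg _)
      _ = ‖T‖ := mul_one _

theorem single_coe_zero (x : X) :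
    (letI := Classical.decEq X; lp.single 2 x (0:ℂ)) = (0 : L2 X) := by
  letI := Classical.decEq X
  apply lp.ext
  funext y
  rw [lp.single_apply]
  by_cases h : y = x <;> simp [h]

theorem mem_span_stdBasis {h : L2 X} {F : Set X} (hF : F.Finite)
    (hsupp : ∀ x : X, (h : X → ℂ) x ≠ 0 → x ∈ F) :
    h ∈ Submodule.span ℂ (stdBasis '' F) := by
  classical
  have heq : h = ∑ x ∈ hF.toFinset, ((h : X → ℂ) x) • stdBasis x := by
    apply lp.ext
    rw [lp.coeFn_sum]
    funext y
    rw [Finset.sum_apply]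
    have happ : ∀ x : X, ((((h : X → ℂ) x) • stdBasis x : L2 X) : X → ℂ) y =
        if y = x then (h : X → ℂ) y else 0 := by
      intro x
      rw [lp.coeFn_smul, Pi.smul_apply, stdBasis_eq, lp.single_apply]
      by_cases hxy : y = x <;> simp [hxy]
    rw [Finset.sum_congr rfl fun x _ => happ x]
    rw [Finset.sum_ite_eq hF.toFinset y (fun _ => (h : X → ℂ) y)]
    by_cases hy : y ∈ hF.toFinset
    · simp [hy]
    · simp only [hy, if_false]
      by_contra hne
      exact hy (hF.mem_toFinset.2 (hsupp y hne))
  rw [heq]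
  refine Submodule.sum_mem _ fun x hx => Submodule.smul_mem _ _ ?_
  exact Submodule.subset_span ⟨x, hF.mem_toFinset.1 hx, rfl⟩

theorem mulCLM_compact {f : Linf X} (hf : (Function.support fun x => f x).Finite) :
    IsCompactOperator ⇑(mulCLM f) := by
  haveI := FiniteDimensional.span_of_finite ℂ (hf.image stdBasis)
  refine finite_rank_compact
    (Submodule.span ℂ (stdBasis '' (Function.support fun x => f x))) fun g => ?_
  refine mem_span_stdBasis hf fun x hx => ?_
  rw [mulCLM_apply] at hx
  exact Function.mem_support.2 (left_ne_zero_of_mul hx)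

theorem chi_conj (S : Set X) (x : X) :
    (starRingEnd ℂ) ((chi S : X → ℂ) x) = (chi S : X → ℂ) x := by
  by_cases hx : x ∈ S <;> simp [chi_apply, Set.indicator_apply, hx]

theorem mulCLM_chi_proj (S : Set X) : IsProjB (mulCLM (chi S)) := by
  constructor
  · rw [ContinuousLinearMap.star_eq_adjoint]
    refine ((ContinuousLinearMap.eq_adjoint_iff _ _).2 ?_).symm
    intro g h
    rw [lp.inner_eq_tsum, lp.inner_eq_tsum]
    refine tsum_congr fun x => ?_
    show (inner ℂ ((mulCLM (chi S) g : X → ℂ) x) ((h : X → ℂ) x) : ℂ) =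
      inner ℂ ((g : X → ℂ) x) ((mulCLM (chi S) h : X → ℂ) x)
    rw [RCLike.inner_apply, RCLike.inner_apply, mulCLM_apply, mulCLM_apply, map_mul,
      chi_conj]
    ring
  · refine ContinuousLinearMap.ext fun g => ?_
    rw [ContinuousLinearMap.mul_apply]
    apply lp.ext
    funext x
    rw [mulCLM_apply, mulCLM_apply]
    by_cases hx : x ∈ S <;> simp [chi_apply, Set.indicator_apply, hx]

set_option maxHeartbeats 1000000 in
theorem projCLM_eq_mulCLM_chi (S : ℕ → Set X) :
    projCLM (⋃ n, Set.range ⇑(mulCLM (chi (S n)))) = mulCLM (chi (⋃ n, S n)) := by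
  classical
  refine ContinuousLinearMap.ext fun v => ?_
  refine projCLM_eq_of _ _ _ ?_ ?_
  · -- `mulCLM (chi U) v` lies in the closure of the span
    have hsupp : ∀ x : X, ((mulCLM (chi (⋃ n, S n)) v : L2 X) : X → ℂ) x ≠ 0 →
        x ∈ ⋃ n, S n := by
      intro x hx
      rw [mulCLM_apply] at hx
      by_contra hxU
      exact (left_ne_zero_of_mul hx) (by simp [chi_apply, Set.indicator_apply, hxU])
    have hsingle_mem : ∀ x : X,
        lp.single 2 x (((mulCLM (chi (⋃ n, S n)) v : L2 X) : X → ℂ) x) ∈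
        Submodule.span ℂ (⋃ n, Set.range ⇑(mulCLM (chi (S n)))) := by
      intro x
      by_cases hx : ((mulCLM (chi (⋃ n, S n)) v : L2 X) : X → ℂ) x = 0
      · rw [hx]
        rw [show lp.single 2 x (0:ℂ) = (0 : L2 X) from single_coe_zero x]
        exact Submodule.zero_mem _
      · obtain ⟨n, hn⟩ := Set.mem_iUnion.1 (hsupp x hx)
        have hst : lp.single 2 x (((mulCLM (chi (⋃ n, S n)) v : L2 X) : X → ℂ) x) =
            mulCLM (chi (S n)) (lp.single 2 x (((mulCLM (chi (⋃ n, S n)) v : L2 X) : X → ℂ) x)) := by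
          apply lp.ext
          funext y
          simp only [mulCLM_apply]
          by_cases hxy : y = x
          · subst hxy
            have h1 : (chi (S n) : X → ℂ) y = 1 := by
              simp [chi_apply, Set.indicator_apply, hn]
            rw [h1, one_mul]
          · rw [lp.single_apply_ne 2 x _ hxy, mul_zero]
        rw [hst]
        exact Submodule.subset_span (Set.mem_iUnion.2 ⟨n, Set.mem_range_self _⟩)
    have hsum := lp.hasSum_single (by norm_num : (2:ENNReal) ≠ ⊤)
      (mulCLM (chi (⋃ n, S n)) v)
    have hclosed : IsClosed
        ((Submodule.span ℂ (⋃ n, Set.range ⇑(mulCLM (chi (S n))))).topologicalClosure :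
          Set (L2 X)) := Submodule.isClosed_topologicalClosure _
    refine hclosed.mem_of_tendsto hsum (Filter.Eventually.of_forall fun s => ?_)
    show (∑ x ∈ s, lp.single 2 x (((mulCLM (chi (⋃ n, S n)) v : L2 X) : X → ℂ) x)) ∈
      (Submodule.span ℂ (⋃ n, Set.range ⇑(mulCLM (chi (S n))))).topologicalClosure
    exact Submodule.le_topologicalClosure _ (Submodule.sum_mem _ fun x _ => hsingle_mem x)
  · refine inner_closure_span_zero ?_
    rintro w hw
    rw [Set.mem_iUnion] at hw
    obtain ⟨n, hn⟩ := hw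
    obtain ⟨u, rfl⟩ := hn
    rw [lp.inner_eq_tsum]
    have hterm : ∀ x : X,
        (inner ℂ (((v - mulCLM (chi (⋃ m, S m)) v : L2 X) : X → ℂ) x)
          ((mulCLM (chi (S n)) u : L2 X) x) : ℂ) = 0 := by
      intro x
      rw [lp.coeFn_sub, Pi.sub_apply, RCLike.inner_apply, mulCLM_apply, mulCLM_apply]
      by_cases hx : x ∈ S n
      · have hxU : x ∈ ⋃ m, S m := Set.mem_iUnion.2 ⟨n, hx⟩
        simp [chi_apply, Set.indicator_apply, hx, hxU]
      · simp [chi_apply, Set.indicator_apply, hx]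
    rw [tsum_congr hterm, tsum_zero]

/-- Transfer of a state on B(l²) to a state on l∞. -/
def stateOfB (φ : (L2 X →L[ℂ] L2 X) →ₗ[ℂ] ℂ) : Linf X →ₗ[ℂ] ℂ where
  toFun f := φ (mulCLM f)
  map_add' f g := by
    show φ (mulCLM (f + g)) = φ (mulCLM f) + φ (mulCLM g)
    rw [mulCLM_add, map_add]
  map_smul' c f := by
    show φ (mulCLM (c • f)) = (RingHom.id ℂ) c • φ (mulCLM f)
    rw [mulCLM_smul, map_smul, RingHom.id_apply]

theorem stateOfB_props {φ : (L2 X →L[ℂ] L2 X) →ₗ[ℂ] ℂ} (hst : IsStateB φ)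
    (hsing : SingularB φ) (hreg : RegularB φ) :
    IsStateLinf (stateOfB φ) ∧ SingularLinf (stateOfB φ) ∧ RegularLinf (stateOfB φ) := by
  refine ⟨⟨?_, ?_⟩, ?_, ?_⟩
  · show φ (mulCLM 1) = 1
    rw [mulCLM_one]
    exact hst.1
  · intro f hf
    show 0 ≤ φ (mulCLM f)
    exact hst.2 _ fun g => mulCLM_pos hf g
  · intro f hfin
    show φ (mulCLM f) = 0
    exact hsing _ (mulCLM_compact hfin)
  · intro S hS
    show φ (mulCLM (chi (⋃ n, S n))) = 0
    rw [← projCLM_eq_mulCLM_chi S]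
    exact hreg _ (fun n => mulCLM_chi_proj (S n)) hS

end FAX

/-- Theorem 27 of "Quantum measurable cardinals": assuming the continuum hypothesis,
`l^∞(κ)` and `B(l²(κ))` have regular singular states iff `κ` is Ulam measurable. -/
theorem ch_regular_singular_iff_ulam_measurable
    (hCH : (2 : Cardinal.{0}) ^ Cardinal.aleph0 = Cardinal.aleph 1)
    (X : Type) (hX : Cardinal.aleph0 ≤ Cardinal.mk X) :
    ((∃ φ : Linf X →ₗ[ℂ] ℂ, IsStateLinf φ ∧ SingularLinf φ ∧ RegularLinf φ) ↔
      (Cardinal.aleph0 < Cardinal.mk X ∧ ∃ μ : Set X → ℝ, IsFAProb μ ∧ TwoValuedMeas μ ∧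
        CountablyAdditiveMeas μ ∧ VanishesOnSingletons μ)) ∧
    ((∃ φ : (L2 X →L[ℂ] L2 X) →ₗ[ℂ] ℂ, IsStateB φ ∧ SingularB φ ∧ RegularB φ) ↔
      (Cardinal.aleph0 < Cardinal.mk X ∧ ∃ μ : Set X → ℝ, IsFAProb μ ∧ TwoValuedMeas μ ∧
        CountablyAdditiveMeas μ ∧ VanishesOnSingletons μ)) := by
  have hfwd : ∀ ψ : Linf X →ₗ[ℂ] ℂ, IsStateLinf ψ → SingularLinf ψ → RegularLinf ψ →
      (Cardinal.aleph0 < Cardinal.mk X ∧ ∃ μ : Set X → ℝ, IsFAProb μ ∧ TwoValuedMeas μ ∧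
        CountablyAdditiveMeas μ ∧ VanishesOnSingletons μ) := by
    intro ψ h1 h2 h3
    obtain ⟨hμ, hregμ, hsingμ⟩ := FAX.measure_of_state h1 h2 h3
    refine ⟨FAX.mk_gt_of_meas hX hμ hregμ hsingμ, ?_⟩
    obtain ⟨m, a1, a2, a3, a4⟩ := FAX.forward_core hCH hμ hregμ hsingμ
    exact ⟨m, a1, a2, a3, a4⟩
  constructor
  · constructor
    · rintro ⟨φ, h1, h2, h3⟩
      exact hfwd φ h1 h2 h3
    · rintro ⟨-, μ, hμ, h2, hCA, hsing⟩
      exact FAX.exists_state_of_meas hμ h2 hCA hsing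
  · constructor
    · rintro ⟨φ, h1, h2, h3⟩
      obtain ⟨b1, b2, b3⟩ := FAX.stateOfB_props h1 h2 h3
      exact hfwd _ b1 b2 b3
    · rintro ⟨-, μ, hμ, h2, hCA, hsing⟩
      exact FAX.exists_stateB_of_meas hμ h2 hCA hsing
end
end
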